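/- arXiv:1903.11838 — 5 statements merged into one kernel-verified Lean document; each statement's English description precedes it below -/
import Mathlib

section
/- The exponential integral E₁ satisfies ∫₀^∞ E₁(r)² dr = 2 log 2, where E₁(z) = ∫₁^∞ e^{-tz}/t dt for z > 0. -/
open MeasureTheory Real Set Filter Topology

lemma intExpNeg {c : ℝ} (hc : 0 < c) :
    ∫ r in Set.Ioi (0:ℝ), Real.exp (-c * r) = 1 / c := by
  have hderiv : ∀ x ∈ Set.Ici (0:ℝ),
      HasDerivAt (fun r => -Real.exp (-c*r) / c) (Real.exp (-c*x)) x := by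
    intro x _
    have h1 : HasDerivAt (fun r : ℝ => -c * r) (-c) x := by
      simpa using (hasDerivAt_id x).const_mul (-c)
    have h2 := (Real.hasDerivAt_exp (-c*x)).comp x h1
    have h3 := h2.neg.div_const c
    refine h3.congr_deriv ?_
    field_simp
  have hlim : Tendsto (fun r => -Real.exp (-c*r) / c) atTop (𝓝 0) := by
    have h1 : Tendsto (fun r : ℝ => c * r) atTop atTop :=
      Tendsto.const_mul_atTop hc tendsto_id
    have h2 : Tendsto (fun r : ℝ => Real.exp (-(c*r))) atTop (𝓝 0) :=
      Real.tendsto_exp_neg_atTop_nhds_zero.comp h1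
    have h3 := (h2.neg).div_const c
    simpa [neg_mul] using h3
  have := integral_Ioi_of_hasDerivAt_of_nonneg' hderiv
    (fun x _ => (Real.exp_pos _).le) hlim
  rw [this]
  norm_num
  ring

lemma tendsto_log_sub_log {s : ℝ} (hs : 0 < s) :
    Tendsto (fun t => Real.log t - Real.log (s + t)) atTop (𝓝 0) := by
  have h1 : Tendsto (fun t : ℝ => 1 + s / t) atTop (𝓝 1) := by
    simpa using (tendsto_const_nhds.div_atTop (tendsto_id) : Tendsto (fun t:ℝ => s/t) atTop (𝓝 0)).const_add 1
  have h2 : Tendsto (fun t : ℝ => Real.log (1 + s / t)) atTop (𝓝 0) := by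
    have := ((Real.continuousAt_log one_ne_zero).tendsto).comp h1
    simpa [Function.comp_def] using this
  have h3 := h2.neg
  rw [neg_zero] at h3
  refine h3.congr' ?_
  filter_upwards [eventually_gt_atTop (0:ℝ)] with t ht
  have hst : 0 < s + t := by linarith
  rw [show 1 + s / t = (s + t) / t by field_simp; ring, Real.log_div hst.ne' ht.ne']
  ring

lemma K2 {s : ℝ} (hs : 0 < s) :
    IntegrableOn (fun t => 1 / ((s + t) * (s * t))) (Set.Ioi (1:ℝ)) ∧
    (∫ t in Set.Ioi (1:ℝ), 1 / ((s + t) * (s * t))) = Real.log (1 + s) / s ^ 2 := by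
  have hderiv : ∀ x ∈ Set.Ici (1:ℝ),
      HasDerivAt (fun t => (Real.log t - Real.log (s + t)) / s ^ 2)
        (1 / ((s + x) * (s * x))) x := by
    intro x hx
    have hx0 : (0:ℝ) < x := lt_of_lt_of_le one_pos hx
    have hsx : (0:ℝ) < s + x := by linarith
    have h1 : HasDerivAt Real.log x⁻¹ x := Real.hasDerivAt_log hx0.ne'
    have h2 : HasDerivAt (fun t : ℝ => Real.log (s + t)) (s+x)⁻¹ x := by
      have := (Real.hasDerivAt_log hsx.ne').comp x ((hasDerivAt_id x).const_add s)
      simpa [Function.comp_def] using this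
    have h3 := (h1.sub h2).div_const (s ^ 2)
    refine h3.congr_deriv ?_
    field_simp
    ring
  have hpos : ∀ x ∈ Set.Ioi (1:ℝ), 0 ≤ 1 / ((s + x) * (s * x)) := by
    intro x hx
    have hx0 : (0:ℝ) < x := lt_trans one_pos hx
    positivity
  have hlim : Tendsto (fun t => (Real.log t - Real.log (s + t)) / s ^ 2) atTop (𝓝 0) := by
    have := (tendsto_log_sub_log hs).div_const (s ^ 2)
    simpa using this
  refine ⟨integrableOn_Ioi_deriv_of_nonneg' hderiv hpos hlim, ?_⟩
  have := integral_Ioi_of_hasDerivAt_of_nonneg' hderiv hpos hlim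
  rw [this, Real.log_one]
  rw [show s + 1 = 1 + s by ring]
  ring

lemma tendsto_log_add_div : Tendsto (fun x : ℝ => Real.log (1 + x) / x) atTop (𝓝 0) := by
  have hA : Tendsto (fun x : ℝ => Real.log x / x) atTop (𝓝 0) :=
    Real.isLittleO_log_id_atTop.tendsto_div_nhds_zero
  have hB : Tendsto (fun x : ℝ => (1:ℝ) + x) atTop atTop :=
    tendsto_atTop_add_const_left _ 1 tendsto_id
  have hC : Tendsto (fun x : ℝ => Real.log (1 + x) / (1 + x)) atTop (𝓝 0) := hA.comp hB
  have hD : Tendsto (fun x : ℝ => (1 + x) / x) atTop (𝓝 1) := by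
    have := (tendsto_const_nhds.div_atTop (tendsto_id) : Tendsto (fun x:ℝ => (1:ℝ)/x) atTop (𝓝 0)).add_const 1
    rw [zero_add] at this
    refine this.congr' ?_
    filter_upwards [eventually_gt_atTop (0:ℝ)] with x hx
    field_simp
  have := hC.mul hD
  rw [zero_mul] at this
  refine this.congr' ?_
  filter_upwards [eventually_gt_atTop (0:ℝ)] with x hx
  have h1x : (0:ℝ) < 1 + x := by linarith
  field_simp

lemma K3 :
    IntegrableOn (fun s => Real.log (1 + s) / s ^ 2) (Set.Ioi (1:ℝ)) ∧
    (∫ s in Set.Ioi (1:ℝ), Real.log (1 + s) / s ^ 2) = 2 * Real.log 2 := by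
  set G : ℝ → ℝ := fun s => -(Real.log (1 + s) / s) + (Real.log s - Real.log (1 + s)) with hG
  have hderiv : ∀ x ∈ Set.Ici (1:ℝ), HasDerivAt G (Real.log (1 + x) / x ^ 2) x := by
    intro x hx
    have hx0 : (0:ℝ) < x := lt_of_lt_of_le one_pos hx
    have h1x : (0:ℝ) < 1 + x := by linarith
    have hlog : HasDerivAt (fun t : ℝ => Real.log (1 + t)) (1+x)⁻¹ x := by
      have := (Real.hasDerivAt_log h1x.ne').comp x ((hasDerivAt_id x).const_add 1)
      simpa [Function.comp_def] using this
    have hdiv : HasDerivAt (fun t : ℝ => Real.log (1 + t) / t)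
        (((1+x)⁻¹ * x - Real.log (1 + x) * 1) / x ^ 2) x :=
      hlog.div (hasDerivAt_id x) hx0.ne'
    have h2 : HasDerivAt Real.log x⁻¹ x := Real.hasDerivAt_log hx0.ne'
    have h3 := (hdiv.neg).add (h2.sub hlog)
    refine h3.congr_deriv ?_
    field_simp
    ring
  have hpos : ∀ x ∈ Set.Ioi (1:ℝ), 0 ≤ Real.log (1 + x) / x ^ 2 := by
    intro x hx
    have hx0 : (0:ℝ) < x := lt_trans one_pos hx
    have : (0:ℝ) ≤ Real.log (1 + x) := Real.log_nonneg (by linarith)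
    positivity
  have hlim : Tendsto G atTop (𝓝 0) := by
    have hA := tendsto_log_add_div.neg
    rw [neg_zero] at hA
    have hB : Tendsto (fun s : ℝ => Real.log s - Real.log (1 + s)) atTop (𝓝 0) := by
      have := tendsto_log_sub_log one_pos
      simpa using this
    have := hA.add hB
    rw [add_zero] at this
    exact this
  refine ⟨integrableOn_Ioi_deriv_of_nonneg' hderiv hpos hlim, ?_⟩
  have := integral_Ioi_of_hasDerivAt_of_nonneg' hderiv hpos hlim
  rw [this, hG]
  norm_num [Real.log_one]
  ring


/-- `∫₀^∞ E₁(r)² dr = 2 log 2`, where `E₁ z = ∫₁^∞ e^{-tz}/t dt`. -/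
theorem integral_expInt_sq (E₁ : ℝ → ℝ)
    (hE₁ : ∀ z : ℝ, 0 < z → E₁ z = ∫ t in Set.Ioi (1:ℝ), Real.exp (-t * z) / t) :
    ∫ r in Set.Ioi (0:ℝ), (E₁ r) ^ 2 = 2 * Real.log 2 := by
  set μ1 : Measure ℝ := volume.restrict (Set.Ioi (1:ℝ)) with hμ1
  set E : ℝ → ℝ := fun r => ∫ t in Set.Ioi (1:ℝ), Real.exp (-t * r) / t with hE
  have measE : Measurable E := by
    have h : StronglyMeasurable (Function.uncurry fun r t => Real.exp (-t * r) / t) := by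
      apply Measurable.stronglyMeasurable
      exact ((measurable_snd.neg.mul measurable_fst).exp.div measurable_snd)
    exact (h.integral_prod_right (ν := μ1)).measurable
  have hsec : ∀ r : ℝ, 0 < r →
      IntegrableOn (fun t => Real.exp (-t * r) / t) (Set.Ioi (1:ℝ)) := by
    intro r hr
    apply Integrable.mono' (exp_neg_integrableOn_Ioi 1 hr)
    · exact (((measurable_id.neg.mul measurable_const).exp.div measurable_id)).aestronglyMeasurable
    · filter_upwards [ae_restrict_mem measurableSet_Ioi] with t ht
      have ht0 : (0:ℝ) < t := lt_trans one_pos ht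
      rw [Real.norm_eq_abs, abs_of_nonneg (by positivity)]
      rw [show -r * t = -t * r by ring]
      exact div_le_self (Real.exp_pos _).le (le_of_lt ht)
  have hEnn : ∀ r : ℝ, 0 ≤ E r := fun r =>
    setIntegral_nonneg measurableSet_Ioi fun t ht =>
      div_nonneg (Real.exp_pos _).le (le_of_lt (lt_trans one_pos ht))
  have hnnsec : ∀ r : ℝ, (0:ℝ → ℝ) ≤ᵐ[μ1] fun t => Real.exp (-t * r) / t := by
    intro r
    filter_upwards [ae_restrict_mem measurableSet_Ioi] with t ht
    have ht0 : (0:ℝ) < t := lt_trans one_pos ht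
    positivity
  have hm1 : ∀ r : ℝ, AEMeasurable (fun t => ENNReal.ofReal (Real.exp (-t * r) / t)) μ1 :=
    fun r => (((measurable_id.neg.mul measurable_const).exp.div
      measurable_id).ennreal_ofReal).aemeasurable
  -- Step 1 : express the square as a double lintegral over the product
  have step1 : (∫⁻ r in Set.Ioi (0:ℝ), ENNReal.ofReal (E r ^ 2)) =
      ∫⁻ r in Set.Ioi (0:ℝ), ∫⁻ p : ℝ × ℝ,
        ENNReal.ofReal (Real.exp (-p.1 * r) / p.1) *
        ENNReal.ofReal (Real.exp (-p.2 * r) / p.2) ∂(μ1.prod μ1) := by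
    refine lintegral_congr_ae ?_
    filter_upwards [ae_restrict_mem measurableSet_Ioi] with r hr
    have h1 : ENNReal.ofReal (E r ^ 2) = ENNReal.ofReal (E r) * ENNReal.ofReal (E r) := by
      rw [← ENNReal.ofReal_mul (hEnn r), sq]
    rw [h1, ofReal_integral_eq_lintegral_ofReal (hsec r hr) (hnnsec r)]
    exact (lintegral_prod_mul (hm1 r) (hm1 r)).symm
  -- Step 2 : swap the order of integration (Tonelli)
  have step2 : (∫⁻ r in Set.Ioi (0:ℝ), ∫⁻ p : ℝ × ℝ,
        ENNReal.ofReal (Real.exp (-p.1 * r) / p.1) *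
        ENNReal.ofReal (Real.exp (-p.2 * r) / p.2) ∂(μ1.prod μ1)) =
      ∫⁻ p : ℝ × ℝ, (∫⁻ r in Set.Ioi (0:ℝ),
        ENNReal.ofReal (Real.exp (-p.1 * r) / p.1) *
        ENNReal.ofReal (Real.exp (-p.2 * r) / p.2)) ∂(μ1.prod μ1) := by
    apply lintegral_lintegral_swap
    have m1 : Measurable fun q : ℝ × (ℝ × ℝ) => Real.exp (-q.2.1 * q.1) / q.2.1 :=
      ((measurable_snd.fst.neg.mul measurable_fst).exp.div measurable_snd.fst)
    have m2 : Measurable fun q : ℝ × (ℝ × ℝ) => Real.exp (-q.2.2 * q.1) / q.2.2 :=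
      ((measurable_snd.snd.neg.mul measurable_fst).exp.div measurable_snd.snd)
    exact (m1.ennreal_ofReal.mul m2.ennreal_ofReal).aemeasurable
  -- Step 3 : compute the inner integral over r
  have step3 : ∀ᵐ p : ℝ × ℝ ∂(μ1.prod μ1),
      (∫⁻ r in Set.Ioi (0:ℝ),
        ENNReal.ofReal (Real.exp (-p.1 * r) / p.1) *
        ENNReal.ofReal (Real.exp (-p.2 * r) / p.2)) =
      ENNReal.ofReal (1 / ((p.1 + p.2) * (p.1 * p.2))) := by
    rw [hμ1, Measure.prod_restrict]
    filter_upwards [ae_restrict_mem (measurableSet_Ioi.prod measurableSet_Ioi)] with p hp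
    obtain ⟨hp1, hp2⟩ := hp
    have hs : (0:ℝ) < p.1 := lt_trans one_pos hp1
    have ht : (0:ℝ) < p.2 := lt_trans one_pos hp2
    have hst : (0:ℝ) < p.1 + p.2 := by linarith
    have hpt : ∀ r : ℝ,
        ENNReal.ofReal (Real.exp (-p.1 * r) / p.1) *
        ENNReal.ofReal (Real.exp (-p.2 * r) / p.2) =
        ENNReal.ofReal (Real.exp (-(p.1 + p.2) * r) / (p.1 * p.2)) := by
      intro r
      rw [← ENNReal.ofReal_mul (by positivity)]
      congr 1
      rw [div_mul_div_comm, ← Real.exp_add]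
      have : -p.1 * r + -p.2 * r = -(p.1 + p.2) * r := by ring
      rw [this]
    simp_rw [hpt]
    have hint : IntegrableOn (fun r => Real.exp (-(p.1 + p.2) * r) / (p.1 * p.2))
        (Set.Ioi (0:ℝ)) := (exp_neg_integrableOn_Ioi 0 hst).div_const _
    rw [← ofReal_integral_eq_lintegral_ofReal hint
      (Filter.Eventually.of_forall fun r => by positivity)]
    congr 1
    rw [integral_div, intExpNeg hst, div_div]
  -- Step 4 : split the product lintegral (Tonelli again)
  have step4 : (∫⁻ p : ℝ × ℝ, ENNReal.ofReal (1 / ((p.1 + p.2) * (p.1 * p.2)))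
        ∂(μ1.prod μ1)) =
      ∫⁻ s in Set.Ioi (1:ℝ), (∫⁻ t in Set.Ioi (1:ℝ),
        ENNReal.ofReal (1 / ((s + t) * (s * t)))) := by
    apply lintegral_prod
    exact ((measurable_const.div ((measurable_fst.add measurable_snd).mul
      (measurable_fst.mul measurable_snd))).ennreal_ofReal).aemeasurable
  -- Step 5 : compute the integral over t
  have step5 : ∀ᵐ s ∂μ1,
      (∫⁻ t in Set.Ioi (1:ℝ), ENNReal.ofReal (1 / ((s + t) * (s * t)))) =
      ENNReal.ofReal (Real.log (1 + s) / s ^ 2) := by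
    filter_upwards [ae_restrict_mem measurableSet_Ioi] with s hs
    have hs0 : (0:ℝ) < s := lt_trans one_pos hs
    rw [← ofReal_integral_eq_lintegral_ofReal (K2 hs0).1 ?_, (K2 hs0).2]
    filter_upwards [ae_restrict_mem measurableSet_Ioi] with t ht
    have ht0 : (0:ℝ) < t := lt_trans one_pos ht
    positivity
  -- Step 6 : compute the integral over s
  have step6 : (∫⁻ s in Set.Ioi (1:ℝ), ENNReal.ofReal (Real.log (1 + s) / s ^ 2)) =
      ENNReal.ofReal (2 * Real.log 2) := by
    rw [← ofReal_integral_eq_lintegral_ofReal K3.1 ?_, K3.2]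
    filter_upwards [ae_restrict_mem measurableSet_Ioi] with s hs
    have hs0 : (0:ℝ) < s := lt_trans one_pos hs
    have hlog : (0:ℝ) ≤ Real.log (1 + s) := Real.log_nonneg (by linarith)
    positivity
  have key : (∫⁻ r in Set.Ioi (0:ℝ), ENNReal.ofReal (E r ^ 2)) =
      ENNReal.ofReal (2 * Real.log 2) := by
    rw [step1, step2, lintegral_congr_ae step3, step4, lintegral_congr_ae step5, step6]
  have hcongr : (∫ r in Set.Ioi (0:ℝ), E₁ r ^ 2) = ∫ r in Set.Ioi (0:ℝ), E r ^ 2 :=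
    setIntegral_congr_fun measurableSet_Ioi fun r hr => by rw [hE₁ r hr]
  rw [hcongr, integral_eq_lintegral_of_nonneg_ae
      (Filter.Eventually.of_forall fun r => sq_nonneg (E r))
      ((measE.pow_const 2).aestronglyMeasurable), key,
    ENNReal.toReal_ofReal (by positivity)]
end

section
/- For z > 0, E₁(z) = -log z - γ + Ein(z), where Ein(z) = ∫₀^z (1-e^{-t})/t dt and γ is the Euler–Mascheroni constant. -/
open MeasureTheory Set Filter Topology

/-- `exp (-t) * log t` is integrable on `(0, ∞)`. -/
lemma aux_integrableOn_exp_neg_mul_log :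
    IntegrableOn (fun t : ℝ => Real.exp (-t) * Real.log t) (Set.Ioi 0) := by
  have h1 := (Real.GammaIntegral_convergent one_half_pos).const_mul 2
  have h2 := Real.GammaIntegral_convergent (zero_lt_two (α := ℝ))
  refine (h1.add h2).mono' ?_ ?_
  · exact ((Real.measurable_exp.comp measurable_neg).mul
      Real.measurable_log).aestronglyMeasurable
  · filter_upwards [ae_restrict_mem measurableSet_Ioi] with t ht
    have ht0 : (0:ℝ) < t := ht
    have hrp : (0:ℝ) < t ^ ((1:ℝ)/2 - 1) := Real.rpow_pos_of_pos ht0 _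
    have hb : |Real.log t| ≤ 2 * t ^ ((1:ℝ)/2 - 1) + t := by
      have e1 : Real.log t ≤ t - 1 := Real.log_le_sub_one_of_pos ht0
      have h3 : Real.log (t ^ ((1:ℝ)/2 - 1)) = ((1:ℝ)/2 - 1) * Real.log t :=
        Real.log_rpow ht0 _
      have h4 : Real.log (t ^ ((1:ℝ)/2 - 1)) ≤ t ^ ((1:ℝ)/2 - 1) - 1 :=
        Real.log_le_sub_one_of_pos hrp
      rw [abs_le]
      constructor <;> nlinarith
    have key : ‖Real.exp (-t) * Real.log t‖
        ≤ 2 * (Real.exp (-t) * t ^ ((1:ℝ)/2 - 1)) + Real.exp (-t) * t ^ ((2:ℝ) - 1) := by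
      rw [norm_mul, Real.norm_eq_abs, Real.norm_eq_abs, abs_of_pos (Real.exp_pos _),
        show ((2:ℝ) - 1) = 1 by norm_num, Real.rpow_one]
      calc Real.exp (-t) * |Real.log t|
          ≤ Real.exp (-t) * (2 * t ^ ((1:ℝ)/2 - 1) + t) := by
            exact mul_le_mul_of_nonneg_left hb (Real.exp_pos _).le
        _ = 2 * (Real.exp (-t) * t ^ ((1:ℝ)/2 - 1)) + Real.exp (-t) * t := by ring
    exact key

local notation "γ" => Real.eulerMascheroniConstant

/-- `∫_{0}^{∞} e^{-t} log t = -γ`. -/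
lemma aux_integral_exp_neg_mul_log :
    ∫ t in Set.Ioi (0:ℝ), Real.exp (-t) * Real.log t = -γ := by
  have hd := Complex.hasDerivAt_GammaIntegral (s := 1) (by norm_num)
  have hval : (∫ t : ℝ in Set.Ioi 0, (t:ℂ) ^ ((1:ℂ) - 1) * (Real.log t * Real.exp (-t)))
      = ((∫ t in Set.Ioi (0:ℝ), Real.exp (-t) * Real.log t : ℝ) : ℂ) := by
    have h : ∀ t : ℝ, (t:ℂ) ^ ((1:ℂ) - 1) * ((Real.log t : ℂ) * (Real.exp (-t) : ℂ))
        = ((Real.exp (-t) * Real.log t : ℝ) : ℂ) := by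
      intro t
      rw [sub_self, Complex.cpow_zero, one_mul]
      push_cast
      ring
    simp_rw [h]
    exact integral_ofReal
  rw [hval] at hd
  have hev : Complex.Gamma =ᶠ[nhds (1:ℂ)] Complex.GammaIntegral := by
    have hopen : IsOpen {s : ℂ | 0 < s.re} :=
      isOpen_lt continuous_const Complex.continuous_re
    filter_upwards [hopen.mem_nhds (by norm_num : (0:ℝ) < (1:ℂ).re)] with s hs
    exact Complex.Gamma_eq_integral hs
  have hg : HasDerivAt Complex.Gamma
      ((∫ t in Set.Ioi (0:ℝ), Real.exp (-t) * Real.log t : ℝ) : ℂ) 1 :=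
    hd.congr_of_eventuallyEq hev
  have hg' : HasDerivAt Complex.Gamma
      ((∫ t in Set.Ioi (0:ℝ), Real.exp (-t) * Real.log t : ℝ) : ℂ) ((1:ℝ):ℂ) := by
    rwa [Complex.ofReal_one]
  have hr := hg'.real_of_complex
  have hre : (fun x : ℝ => (Complex.Gamma (x:ℂ)).re) = Real.Gamma := by
    ext x
    rw [Complex.Gamma_ofReal, Complex.ofReal_re]
  rw [hre] at hr
  have := hr.unique Real.hasDerivAt_Gamma_one
  rw [Complex.ofReal_re] at this
  linarith [this]

/-- For `z > 0`, `E₁ z = -log z - γ + Ein z`, where `Ein z = ∫₀^z (1-e^{-t})/t dt`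
and `γ` is the Euler–Mascheroni constant. -/
theorem expInt_eq_neg_log_sub_gamma_add_ein (E₁ Ein : ℝ → ℝ)
    (hE₁ : ∀ z : ℝ, 0 < z → E₁ z = ∫ t in Set.Ioi (1:ℝ), Real.exp (-t * z) / t)
    (hEin : ∀ z : ℝ, 0 < z → Ein z = ∫ t in (0:ℝ)..z, (1 - Real.exp (-t)) / t) :
    ∀ z : ℝ, 0 < z →
      E₁ z = -Real.log z - Real.eulerMascheroniConstant + Ein z := by
  intro z hz
  have hz0 : z ≠ 0 := hz.ne'
  -- Step 1: change of variables in `E₁`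
  have step1 : (∫ t in Set.Ioi (1:ℝ), Real.exp (-t * z) / t)
      = ∫ t in Set.Ioi z, Real.exp (-t) / t := by
    have hsub := integral_comp_mul_left_Ioi (fun u => Real.exp (-u) / u) 1 hz
    rw [mul_one] at hsub
    have hcongr : (∫ t in Set.Ioi (1:ℝ), Real.exp (-t * z) / t)
        = ∫ t in Set.Ioi (1:ℝ), z * (Real.exp (-(z * t)) / (z * t)) := by
      refine setIntegral_congr_fun measurableSet_Ioi fun t ht => ?_
      have ht0 : t ≠ 0 := (lt_trans zero_lt_one ht).ne'
      rw [show -t * z = -(z * t) by ring]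
      field_simp
    rw [hcongr, integral_const_mul, hsub, smul_eq_mul, ← mul_assoc,
      mul_inv_cancel₀ hz0, one_mul]
  -- integrabilities on `Ioi z`
  have hint_logexp : IntegrableOn (fun t => Real.exp (-t) * Real.log t) (Set.Ioi z) :=
    aux_integrableOn_exp_neg_mul_log.mono_set (Set.Ioi_subset_Ioi hz.le)
  have hint_div : IntegrableOn (fun t => Real.exp (-t) / t) (Set.Ioi z) := by
    refine ((exp_neg_integrableOn_Ioi z one_pos).const_mul z⁻¹).mono' ?_ ?_
    · exact ((Real.measurable_exp.comp measurable_neg).div measurable_id).aestronglyMeasurable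
    · filter_upwards [ae_restrict_mem measurableSet_Ioi] with t ht
      have htz : z < t := ht
      have ht0 : (0:ℝ) < t := lt_trans hz htz
      rw [Real.norm_eq_abs, abs_of_pos (by positivity)]
      calc Real.exp (-t) / t ≤ Real.exp (-t) / z := by gcongr
        _ = z⁻¹ * Real.exp (-1 * t) := by rw [neg_one_mul, div_eq_inv_mul]
  -- Step 2: integration by parts on `Ioi z`
  have hderivF : ∀ x ∈ Set.Ioi z, HasDerivAt (fun t => Real.exp (-t) * Real.log t)
      (Real.exp (-x) / x - Real.exp (-x) * Real.log x) x := by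
    intro x hx
    have hx0 : (0:ℝ) < x := lt_trans hz hx
    have h1 : HasDerivAt (fun t : ℝ => Real.exp (-t)) (-Real.exp (-x)) x := by
      simpa [Function.comp_def] using (Real.hasDerivAt_exp (-x)).comp x (hasDerivAt_neg x)
    have h2 := Real.hasDerivAt_log hx0.ne'
    exact (h1.mul h2).congr_deriv (by ring)
  have htend : Tendsto (fun t => Real.exp (-t) * Real.log t) atTop (𝓝 0) := by
    refine squeeze_zero_norm' ?_
      (tendsto_rpow_mul_exp_neg_mul_atTop_nhds_zero 1 1 one_pos)
    filter_upwards [eventually_ge_atTop (1:ℝ)] with t ht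
    have ht0 : (0:ℝ) < t := lt_of_lt_of_le one_pos ht
    have hlog : |Real.log t| ≤ t := by
      rw [abs_of_nonneg (Real.log_nonneg ht)]
      linarith [Real.log_le_sub_one_of_pos ht0]
    rw [Real.norm_eq_abs, abs_mul, abs_of_pos (Real.exp_pos _), Real.rpow_one, neg_one_mul]
    calc Real.exp (-t) * |Real.log t| ≤ Real.exp (-t) * t :=
          mul_le_mul_of_nonneg_left hlog (Real.exp_pos _).le
      _ = t * Real.exp (-t) := by ring
  have hIBP : (∫ t in Set.Ioi z, (Real.exp (-t) / t - Real.exp (-t) * Real.log t))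
      = 0 - Real.exp (-z) * Real.log z := by
    refine integral_Ioi_of_hasDerivAt_of_tendsto ?_ hderivF (hint_div.sub hint_logexp) htend
    exact (((Real.continuous_exp.comp continuous_neg).continuousAt).mul
      (Real.continuousAt_log hz0)).continuousWithinAt
  rw [integral_sub hint_div hint_logexp] at hIBP
  have step2 : (∫ t in Set.Ioi z, Real.exp (-t) / t)
      = (∫ t in Set.Ioi z, Real.exp (-t) * Real.log t) - Real.exp (-z) * Real.log z := by
    linarith
  -- Step 3: FTC for `Ein`
  have hderivG : ∀ x ∈ Set.Ioo (0:ℝ) z, HasDerivAt (fun t => (1 - Real.exp (-t)) * Real.log t)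
      (Real.exp (-x) * Real.log x + (1 - Real.exp (-x)) / x) x := by
    intro x hx
    have hx0 : (0:ℝ) < x := hx.1
    have h1 : HasDerivAt (fun t : ℝ => 1 - Real.exp (-t)) (Real.exp (-x)) x := by
      simpa using ((Real.hasDerivAt_exp (-x)).comp x (hasDerivAt_neg x)).const_sub 1
    exact h1.mul (Real.hasDerivAt_log hx0.ne')
  have hG0 : Tendsto (fun t => (1 - Real.exp (-t)) * Real.log t) (𝓝[>] (0:ℝ)) (𝓝 0) := by
    have hb : Tendsto (fun t : ℝ => |Real.log t * t ^ (1:ℝ)|) (𝓝[>] (0:ℝ)) (𝓝 0) := by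
      have := (tendsto_log_mul_rpow_nhdsGT_zero one_pos).abs
      simpa using this
    refine squeeze_zero_norm' ?_ hb
    filter_upwards [self_mem_nhdsWithin] with t ht
    have ht0 : (0:ℝ) < t := ht
    have h1 : Real.exp (-t) ≤ 1 := by
      rw [← Real.exp_zero]
      exact Real.exp_le_exp.mpr (by linarith)
    have h2 : 1 - Real.exp (-t) ≤ t := by linarith [Real.add_one_le_exp (-t)]
    rw [Real.norm_eq_abs, abs_mul, Real.rpow_one, abs_mul,
      abs_of_nonneg (by linarith : (0:ℝ) ≤ 1 - Real.exp (-t))]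
    rw [abs_of_pos ht0, mul_comm |Real.log t| t]
    exact mul_le_mul_of_nonneg_right h2 (abs_nonneg _)
  have hGz : Tendsto (fun t => (1 - Real.exp (-t)) * Real.log t) (𝓝[<] z)
      (𝓝 ((1 - Real.exp (-z)) * Real.log z)) := by
    refine Tendsto.mono_left ?_ nhdsWithin_le_nhds
    exact ((continuous_const.sub (Real.continuous_exp.comp continuous_neg)).continuousAt.mul
      (Real.continuousAt_log hz0)).tendsto
  have hi1 : IntervalIntegrable (fun t => Real.exp (-t) * Real.log t) volume 0 z := by
    rw [intervalIntegrable_iff_integrableOn_Ioc_of_le hz.le]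
    exact aux_integrableOn_exp_neg_mul_log.mono_set Set.Ioc_subset_Ioi_self
  have hi2 : IntervalIntegrable (fun t => (1 - Real.exp (-t)) / t) volume 0 z := by
    rw [intervalIntegrable_iff_integrableOn_Ioc_of_le hz.le]
    refine Integrable.mono' (g := fun _ => (1:ℝ))
      (integrableOn_const measure_Ioc_lt_top.ne) ?_ ?_
    · exact (ContinuousOn.div
        ((continuous_const.sub (Real.continuous_exp.comp continuous_neg)).continuousOn)
        continuousOn_id (fun t ht => ht.1.ne')).aestronglyMeasurable measurableSet_Ioc
    · filter_upwards [ae_restrict_mem measurableSet_Ioc] with t ht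
      have ht0 : (0:ℝ) < t := ht.1
      have h1 : Real.exp (-t) ≤ 1 := by
        rw [← Real.exp_zero]
        exact Real.exp_le_exp.mpr (by linarith)
      have h2 : 1 - Real.exp (-t) ≤ t := by linarith [Real.add_one_le_exp (-t)]
      rw [Real.norm_eq_abs, abs_div, abs_of_pos ht0,
        abs_of_nonneg (by linarith : (0:ℝ) ≤ 1 - Real.exp (-t))]
      rw [div_le_one ht0]
      exact h2
  have hFTC := intervalIntegral.integral_eq_sub_of_hasDerivAt_of_tendsto hz hderivG
    (hi1.add hi2) hG0 hGz
  rw [intervalIntegral.integral_add hi1 hi2] at hFTC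
  have hEinval : (∫ t in (0:ℝ)..z, (1 - Real.exp (-t)) / t)
      = (1 - Real.exp (-z)) * Real.log z
        - ∫ t in Set.Ioc (0:ℝ) z, Real.exp (-t) * Real.log t := by
    rw [← intervalIntegral.integral_of_le hz.le]
    linarith
  -- Step 4: splitting the γ-integral
  have hγ := aux_integral_exp_neg_mul_log
  have hsplit : (∫ t in Set.Ioc (0:ℝ) z, Real.exp (-t) * Real.log t)
      + (∫ t in Set.Ioi z, Real.exp (-t) * Real.log t) = -γ := by
    rw [← hγ, ← Set.Ioc_union_Ioi_eq_Ioi hz.le]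
    rw [setIntegral_union (Set.Ioc_disjoint_Ioi le_rfl) measurableSet_Ioi
      (aux_integrableOn_exp_neg_mul_log.mono_set Set.Ioc_subset_Ioi_self) hint_logexp]
  -- put everything together
  rw [hE₁ z hz, step1, step2, hEin z hz, hEinval]
  ring_nf
  ring_nf at hsplit
  linarith
end

section
/- Under the same hypotheses as the boundedness of S_μ (σ continuous with 0 < σ_min ≤ σ ≤ σ_max, μ > 0, g bounded measurable, (S_μ g)(x) = μ^{-1} ∫₀^x e^{μ^{-1}τ(x,y)} g(y) dy with τ(x,y)=∫ₓ^y σ), the function S_μ g is differentiable a.e. with |(S_μ g)'(x)| ≤ μ^{-1} (1 + σ_max/σ_min) ‖g‖_∞ for a.e. x ∈ [0,1]. -/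
open MeasureTheory Metric Filter Topology

theorem ae_hasDerivAt_primitive_aux {h : ℝ → ℝ} (hi : Integrable h) :
    ∀ᵐ x ∂(volume : Measure ℝ),
      HasDerivAt (fun b => ∫ y in (0:ℝ)..b, h y) (h x) x := by
  filter_upwards [IsUnifLocDoublingMeasure.ae_tendsto_average
    (μ := (volume : Measure ℝ)) hi.locallyIntegrable 1] with x hx
  rw [hasDerivAt_iff_tendsto_slope]
  have δlim : Tendsto (fun y => |y - x| / 2) (𝓝[≠] x) (𝓝[>] (0:ℝ)) := by
    rw [tendsto_nhdsWithin_iff]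
    constructor
    · have : Tendsto (fun y : ℝ => |y - x| / 2) (𝓝 x) (𝓝 (|x - x| / 2)) :=
        ((continuous_id.sub continuous_const).abs.div_const 2).tendsto x
      simpa using this.mono_left nhdsWithin_le_nhds
    · filter_upwards [self_mem_nhdsWithin] with y (hy : y ≠ x)
      have : y - x ≠ 0 := sub_ne_zero.2 hy
      simp only [Set.mem_Ioi]
      positivity
  have hmem : ∀ᶠ y in 𝓝[≠] x, x ∈ closedBall ((x + y) / 2) (1 * (|y - x| / 2)) := by
    refine Eventually.of_forall fun y => ?_
    simp only [mem_closedBall, one_mul, Real.dist_eq]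
    rw [show x - (x + y) / 2 = (x - y) / 2 by ring, abs_div, abs_sub_comm]
    simp
  have key := hx (fun y => (x + y) / 2) (fun y => |y - x| / 2) δlim hmem
  refine key.congr' ?_
  filter_upwards [self_mem_nhdsWithin] with y (hy : y ≠ x)
  have hvol : (volume (closedBall ((x + y) / 2) (|y - x| / 2))).toReal = |y - x| := by
    rw [Real.volume_closedBall]
    rw [show 2 * (|y - x| / 2) = |y - x| by ring, ENNReal.toReal_ofReal (abs_nonneg _)]
  have hii : ∀ a b : ℝ, IntervalIntegrable h volume a b := fun a b => hi.intervalIntegrable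
  have hGsub : ∀ a b : ℝ, (∫ t in (0:ℝ)..b, h t) - ∫ t in (0:ℝ)..a, h t = ∫ t in a..b, h t :=
    fun a b => intervalIntegral.integral_interval_sub_left (hii 0 b) (hii 0 a)
  rw [setAverage_eq, measureReal_def, hvol]
  rcases lt_or_gt_of_ne hy with hlt | hgt
  · -- y < x
    have hIcc : closedBall ((x + y) / 2) (|y - x| / 2) = Set.Icc y x := by
      rw [Real.closedBall_eq_Icc, abs_of_nonpos (by linarith)]
      congr 1 <;> ring_nf
    rw [hIcc, MeasureTheory.integral_Icc_eq_integral_Ioc,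
      ← intervalIntegral.integral_of_le hlt.le, ← hGsub y x]
    rw [slope_def_field, abs_of_nonpos (by linarith : y - x ≤ 0), smul_eq_mul,
      div_eq_mul_inv, inv_neg]
    ring
  · -- x < y
    have hIcc : closedBall ((x + y) / 2) (|y - x| / 2) = Set.Icc x y := by
      rw [Real.closedBall_eq_Icc, abs_of_nonneg (by linarith)]
      congr 1 <;> ring_nf
    rw [hIcc, MeasureTheory.integral_Icc_eq_integral_Ioc,
      ← intervalIntegral.integral_of_le hgt.le, ← hGsub x y]
    rw [slope_def_field, abs_of_nonneg (by linarith : (0:ℝ) ≤ y - x), smul_eq_mul,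
      div_eq_mul_inv]
    ring




/-- `S_μ g` is differentiable a.e. on `[0,1]` with
`|(S_μ g)'(x)| ≤ μ⁻¹ (1 + σmax/σmin) ‖g‖_∞`. -/
theorem transport_solop_deriv_bound (σ g : ℝ → ℝ) (σmin σmax μ M : ℝ)
    (hσmin : 0 < σmin) (hμ : 0 < μ)
    (hσc : ContinuousOn σ (Set.Icc (0:ℝ) 1))
    (hlb : ∀ x ∈ Set.Icc (0:ℝ) 1, σmin ≤ σ x)
    (hub : ∀ x ∈ Set.Icc (0:ℝ) 1, σ x ≤ σmax)
    (hgm : Measurable g) (hgb : ∀ y ∈ Set.Icc (0:ℝ) 1, |g y| ≤ M)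
    (τ : ℝ → ℝ → ℝ) (hτ : ∀ x y, τ x y = ∫ s in x..y, σ s)
    (S : ℝ → ℝ) (hS : ∀ x, S x = μ⁻¹ * ∫ y in (0:ℝ)..x, Real.exp (μ⁻¹ * τ x y) * g y) :
    ∀ᵐ x ∂(volume.restrict (Set.Icc (0:ℝ) 1)),
      ∃ d : ℝ, HasDerivAt S d x ∧ |d| ≤ μ⁻¹ * (1 + σmax / σmin) * M := by
  have hM : 0 ≤ M := le_trans (abs_nonneg _) (hgb 0 (by norm_num))
  have hσmax : 0 < σmax := lt_of_lt_of_le hσmin (le_trans (hlb 0 (by norm_num)) (hub 0 (by norm_num)))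
  set F : ℝ → ℝ := fun t => ∫ s in (0:ℝ)..t, σ s with hFdef
  have hσint : ∀ a ∈ Set.Icc (0:ℝ) 1, ∀ b ∈ Set.Icc (0:ℝ) 1, IntervalIntegrable σ volume a b := by
    intro a ha b hb
    exact (hσc.mono (Set.uIcc_subset_Icc ha hb)).intervalIntegrable
  -- bounds on F on [0,1]
  have hFub : ∀ t ∈ Set.Icc (0:ℝ) 1, F t ≤ σmax := by
    intro t ht
    have h1 : F t ≤ ∫ s in (0:ℝ)..t, σmax := by
      apply intervalIntegral.integral_mono_on ht.1
        (hσint 0 (by norm_num) t ht) intervalIntegrable_const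
      intro s hs
      exact hub s ⟨hs.1, le_trans hs.2 ht.2⟩
    simpa using le_trans h1 (by
      rw [intervalIntegral.integral_const, smul_eq_mul]
      nlinarith [ht.1, ht.2])
  -- F continuity on [0,1]
  have hFc : ContinuousOn F (Set.Icc (0:ℝ) 1) := by
    have := intervalIntegral.continuousOn_primitive_interval
      (μ := volume) (f := σ) (a := 0) (b := 1)
      (by rw [Set.uIcc_of_le (by norm_num : (0:ℝ) ≤ 1)]; exact hσc.integrableOn_Icc)
    rwa [Set.uIcc_of_le (by norm_num : (0:ℝ) ≤ 1)] at this
  set φ : ℝ → ℝ := fun y => Real.exp (μ⁻¹ * F y) * g y with hφdef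
  set h : ℝ → ℝ := (Set.Icc (0:ℝ) 1).indicator φ with hhdef
  have hφmeas : AEStronglyMeasurable φ (volume.restrict (Set.Icc (0:ℝ) 1)) := by
    have hFm : AEMeasurable F (volume.restrict (Set.Icc (0:ℝ) 1)) :=
      hFc.aemeasurable measurableSet_Icc
    exact ((Real.measurable_exp.comp_aemeasurable (hFm.const_mul μ⁻¹)).mul
      hgm.aemeasurable).aestronglyMeasurable
  have hφbd : ∀ y ∈ Set.Icc (0:ℝ) 1, |φ y| ≤ Real.exp (μ⁻¹ * σmax) * M := by
    intro y hy
    rw [hφdef, abs_mul, abs_of_pos (Real.exp_pos _)]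
    exact mul_le_mul (Real.exp_le_exp.2 (by
      have := hFub y hy
      have hμ' : 0 < μ⁻¹ := inv_pos.2 hμ
      nlinarith)) (hgb y hy) (abs_nonneg _) (Real.exp_pos _).le
  have hφint : IntegrableOn φ (Set.Icc (0:ℝ) 1) := by
    refine ⟨hφmeas, HasFiniteIntegral.restrict_of_bounded (C := Real.exp (μ⁻¹ * σmax) * M)
      measure_Icc_lt_top ?_⟩
    filter_upwards [ae_restrict_mem measurableSet_Icc] with y hy
    simpa [Real.norm_eq_abs] using hφbd y hy
  have hhint : Integrable h := hφint.integrable_indicator measurableSet_Icc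
  set G : ℝ → ℝ := fun b => ∫ y in (0:ℝ)..b, h y with hGdef
  have hhii : ∀ a b : ℝ, IntervalIntegrable h volume a b := fun a b => hhint.intervalIntegrable
  -- identity: S = μ⁻¹ exp(-(μ⁻¹ F x)) G x on Ioo 0 1
  have hSeq : ∀ x ∈ Set.Ioo (0:ℝ) 1, S x = μ⁻¹ * (Real.exp (-(μ⁻¹ * F x)) * G x) := by
    intro x hx
    have hxI : x ∈ Set.Icc (0:ℝ) 1 := Set.Ioo_subset_Icc_self hx
    rw [hS]
    congr 1
    rw [hGdef, ← intervalIntegral.integral_const_mul]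
    apply intervalIntegral.integral_congr
    intro y hy
    beta_reduce
    rw [Set.uIcc_of_le hx.1.le] at hy
    have hyI : y ∈ Set.Icc (0:ℝ) 1 := ⟨hy.1, le_trans hy.2 hxI.2⟩
    rw [hτ, hhdef, Set.indicator_of_mem hyI, hφdef]
    have hτeq : (∫ s in x..y, σ s) = F y - F x :=
      (intervalIntegral.integral_interval_sub_left
        (hσint 0 (by norm_num) y hyI) (hσint 0 (by norm_num) x hxI)).symm
    rw [hτeq, mul_sub, sub_eq_add_neg, Real.exp_add]
    ring
  -- a.e. reduction
  have h01 : (volume : Measure ℝ) ({0, 1} : Set ℝ) = 0 :=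
    Set.Finite.measure_zero (Set.toFinite _) volume
  have hIoo : ∀ᵐ x ∂(volume.restrict (Set.Icc (0:ℝ) 1)), x ∈ Set.Ioo (0:ℝ) 1 := by
    filter_upwards [ae_restrict_mem measurableSet_Icc,
      ae_restrict_of_ae (compl_mem_ae_iff.2 h01)] with x hx hx'
    simp only [Set.mem_compl_iff, Set.mem_insert_iff, Set.mem_singleton_iff, not_or] at hx'
    exact ⟨lt_of_le_of_ne hx.1 (Ne.symm hx'.1), lt_of_le_of_ne hx.2 hx'.2⟩
  filter_upwards [hIoo, ae_restrict_of_ae (ae_hasDerivAt_primitive_aux hhint)] with x hxI hGx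
  have hxIcc : x ∈ Set.Icc (0:ℝ) 1 := Set.Ioo_subset_Icc_self hxI
  -- derivative of F at x
  have hFd : HasDerivAt F (σ x) x := by
    apply intervalIntegral.integral_hasDerivAt_right
      (hσint 0 (by norm_num) x hxIcc)
      ((hσc.mono Set.Ioo_subset_Icc_self).stronglyMeasurableAtFilter isOpen_Ioo x hxI)
    exact hσc.continuousAt (Icc_mem_nhds hxI.1 hxI.2)
  set c : ℝ := μ⁻¹ * F x with hcdef
  have hE : HasDerivAt (fun t => Real.exp (-(μ⁻¹ * F t)))
      (Real.exp (-c) * -(μ⁻¹ * σ x)) x := by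
    exact ((hFd.const_mul μ⁻¹).neg).exp
  have hprod : HasDerivAt (fun t => Real.exp (-(μ⁻¹ * F t)) * G t)
      (Real.exp (-c) * -(μ⁻¹ * σ x) * G x + Real.exp (-c) * h x) x := hE.mul hGx
  set d : ℝ := μ⁻¹ * (Real.exp (-c) * -(μ⁻¹ * σ x) * G x + Real.exp (-c) * h x) with hddef
  refine ⟨d, ?_, ?_⟩
  · have hSd : HasDerivAt (fun t => μ⁻¹ * (Real.exp (-(μ⁻¹ * F t)) * G t)) d x :=
      hprod.const_mul μ⁻¹
    apply hSd.congr_of_eventuallyEq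
    filter_upwards [Ioo_mem_nhds hxI.1 hxI.2] with t ht
    exact hSeq t ht
  · -- the bound
    have hhx : Real.exp (-c) * h x = g x := by
      rw [hhdef, Set.indicator_of_mem hxIcc, hφdef, Real.exp_neg, hcdef]
      rw [← mul_assoc, inv_mul_cancel₀ (Real.exp_ne_zero _), one_mul]
    -- key integral bound: exp(-c) * |G x| ≤ M * (μ / σmin)
    have hGbd : Real.exp (-c) * |G x| ≤ M * (μ / σmin) := by
      have h1 : Real.exp (-c) * |G x| = |∫ y in (0:ℝ)..x, Real.exp (-c) * h y| := by
        rw [intervalIntegral.integral_const_mul, abs_mul,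
          abs_of_pos (Real.exp_pos _)]
      have h2 : |∫ y in (0:ℝ)..x, Real.exp (-c) * h y|
          ≤ ∫ y in (0:ℝ)..x, |Real.exp (-c) * h y| :=
        intervalIntegral.abs_integral_le_integral_abs hxI.1.le
      have h3 : (∫ y in (0:ℝ)..x, |Real.exp (-c) * h y|)
          ≤ ∫ y in (0:ℝ)..x, M * Real.exp (μ⁻¹ * σmin * (y - x)) := by
        apply intervalIntegral.integral_mono_on hxI.1.le
          ((hhint.const_mul _).abs.intervalIntegrable)
          (Continuous.intervalIntegrable (continuous_const.mul (((continuous_const.mul (continuous_id.sub continuous_const))).rexp)) 0 x)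
        intro y hy
        have hyI : y ∈ Set.Icc (0:ℝ) 1 := ⟨hy.1, le_trans hy.2 hxIcc.2⟩
        rw [abs_mul, abs_of_pos (Real.exp_pos _), hhdef, Set.indicator_of_mem hyI, hφdef,
          abs_mul, abs_of_pos (Real.exp_pos _), ← mul_assoc, ← Real.exp_add]
        have hFlb : σmin * (x - y) ≤ F x - F y := by
          have heq : F x - F y = ∫ s in y..x, σ s :=
            intervalIntegral.integral_interval_sub_left
              (hσint 0 (by norm_num) x hxIcc) (hσint 0 (by norm_num) y hyI)
          have hc : (∫ s in y..x, σmin) ≤ ∫ s in y..x, σ s := by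
            apply intervalIntegral.integral_mono_on hy.2 intervalIntegrable_const
              (hσint y hyI x hxIcc)
            intro s hs
            exact hlb s ⟨le_trans hy.1 hs.1, le_trans hs.2 hxIcc.2⟩
          rw [heq]
          simpa [mul_comm] using hc
        have hexp : Real.exp (-c + μ⁻¹ * F y) ≤ Real.exp (μ⁻¹ * σmin * (y - x)) := by
          apply Real.exp_le_exp.2
          rw [hcdef]
          have hμ' : 0 < μ⁻¹ := inv_pos.2 hμ
          nlinarith
        calc Real.exp (-c + μ⁻¹ * F y) * |g y|
            ≤ Real.exp (μ⁻¹ * σmin * (y - x)) * M :=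
              mul_le_mul hexp (hgb y hyI) (abs_nonneg _) (Real.exp_pos _).le
          _ = M * Real.exp (μ⁻¹ * σmin * (y - x)) := mul_comm _ _
      have h4 : (∫ y in (0:ℝ)..x, M * Real.exp (μ⁻¹ * σmin * (y - x))) ≤ M * (μ / σmin) := by
        rw [intervalIntegral.integral_const_mul]
        have ha : 0 < μ⁻¹ * σmin := mul_pos (inv_pos.2 hμ) hσmin
        set a : ℝ := μ⁻¹ * σmin with hadef
        have hanti : ∀ y ∈ Set.uIcc (0:ℝ) x, HasDerivAt (fun u => a⁻¹ * Real.exp (a * (u - x)))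
            (Real.exp (a * (y - x))) y := by
          intro y _
          have h5 : HasDerivAt (fun u : ℝ => a * (u - x)) a y := by
            simpa using ((hasDerivAt_id y).sub_const x).const_mul a
          have h6 := (h5.exp).const_mul a⁻¹
          rw [mul_comm (Real.exp _) a, ← mul_assoc, inv_mul_cancel₀ ha.ne', one_mul] at h6
          exact h6
        have hint : (∫ y in (0:ℝ)..x, Real.exp (a * (y - x)))
            = a⁻¹ * Real.exp (a * (x - x)) - a⁻¹ * Real.exp (a * (0 - x)) := by
          apply intervalIntegral.integral_eq_sub_of_hasDerivAt
            (fun y hy => hanti y hy)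
          exact Continuous.intervalIntegrable
            ((continuous_const.mul (continuous_id.sub continuous_const)).rexp) 0 x
        rw [hint]
        have hexp2 : 0 < Real.exp (a * (0 - x)) := Real.exp_pos _
        have h6 : a⁻¹ * Real.exp (a * (x - x)) - a⁻¹ * Real.exp (a * (0 - x)) ≤ a⁻¹ := by
          have : Real.exp (a * (x - x)) = 1 := by simp
          rw [this]
          nlinarith [inv_pos.2 ha]
        have h7 : a⁻¹ = μ / σmin := by
          rw [hadef, mul_inv, inv_inv, div_eq_mul_inv]
        calc M * (a⁻¹ * Real.exp (a * (x - x)) - a⁻¹ * Real.exp (a * (0 - x)))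
            ≤ M * a⁻¹ := by nlinarith
          _ = M * (μ / σmin) := by rw [h7]
      linarith [h1 ▸ le_trans h2 (le_trans h3 h4)]
    -- assemble
    rw [hddef, hhx, abs_mul, abs_of_pos (inv_pos.2 hμ)]
    have hterm : |Real.exp (-c) * -(μ⁻¹ * σ x) * G x + g x|
        ≤ σmax / σmin * M + M := by
      have hA : |Real.exp (-c) * -(μ⁻¹ * σ x) * G x| ≤ σmax / σmin * M := by
        rw [abs_mul, abs_mul, abs_neg, abs_mul, abs_of_pos (Real.exp_pos _),
          abs_of_pos (inv_pos.2 hμ), abs_of_pos (lt_of_lt_of_le hσmin (hlb x hxIcc))]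
        calc Real.exp (-c) * (μ⁻¹ * σ x) * |G x|
            = μ⁻¹ * σ x * (Real.exp (-c) * |G x|) := by ring
          _ ≤ μ⁻¹ * σmax * (M * (μ / σmin)) := by
              apply mul_le_mul
              · exact mul_le_mul_of_nonneg_left (hub x hxIcc) (inv_pos.2 hμ).le
              · exact hGbd
              · positivity
              · positivity
          _ = σmax / σmin * M := by field_simp
      calc |Real.exp (-c) * -(μ⁻¹ * σ x) * G x + g x|
          ≤ |Real.exp (-c) * -(μ⁻¹ * σ x) * G x| + |g x| := abs_add_le _ _
        _ ≤ σmax / σmin * M + M := add_le_add hA (hgb x hxIcc)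
    calc μ⁻¹ * |Real.exp (-c) * -(μ⁻¹ * σ x) * G x + g x|
        ≤ μ⁻¹ * (σmax / σmin * M + M) :=
          mul_le_mul_of_nonneg_left hterm (inv_pos.2 hμ).le
      _ = μ⁻¹ * (1 + σmax / σmin) * M := by ring
end

section
/- Let σ be continuous on [0,1] with 0 < σ_min ≤ σ ≤ σ_max, τ(x,y) = ∫ₓ^y σ, and for μ > 0 define S_μ g as above. Then for every β > 0, every bounded measurable g, and every x ∈ [0,1], ∫₀¹ μ^β |∂_μ (S_μ g)(x)| dμ ≤ 2 β^{-1} σ_min^{-1} ‖g‖_∞. -/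
open MeasureTheory


section TransportAux



lemma exp_int_bound (u : ℝ) (hu : 0 < u) (a : ℝ) (ha : a ≤ 0) :
    (∫ t in a..(0:ℝ), Real.exp (u * t)) ≤ u⁻¹ := by
  have hd : ∀ t ∈ Set.uIcc a (0:ℝ),
      HasDerivAt (fun t => u⁻¹ * Real.exp (u * t)) (Real.exp (u * t)) t := by
    intro t _
    have h1 : HasDerivAt (fun t : ℝ => u * t) u t := by simpa using (hasDerivAt_id t).const_mul u
    have h2 := h1.exp
    have h3 := h2.const_mul u⁻¹
    refine h3.congr_deriv ?_
    field_simp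
  rw [intervalIntegral.integral_eq_sub_of_hasDerivAt hd
    ((Real.continuous_exp.comp (continuous_const.mul continuous_id)).intervalIntegrable _ _)]
  have h1 : 0 ≤ Real.exp (u * a) := (Real.exp_pos _).le
  have h2 : 0 ≤ u⁻¹ := by positivity
  simp only [mul_zero, Real.exp_zero, mul_one]
  nlinarith

lemma texp_int_bound (u : ℝ) (hu : 0 < u) (a : ℝ) (ha : a ≤ 0) :
    (∫ t in a..(0:ℝ), |t| * Real.exp (u * t)) ≤ u⁻¹ * u⁻¹ := by
  have hcong : (∫ t in a..(0:ℝ), |t| * Real.exp (u * t))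
      = ∫ t in a..(0:ℝ), -t * Real.exp (u * t) := by
    apply intervalIntegral.integral_congr
    intro t ht
    rw [Set.uIcc_of_le ha] at ht
    simp only [abs_of_nonpos ht.2]
  rw [hcong]
  have hd : ∀ t ∈ Set.uIcc a (0:ℝ),
      HasDerivAt (fun t => u⁻¹ * u⁻¹ * (Real.exp (u * t) * (1 - u * t)))
        (-t * Real.exp (u * t)) t := by
    intro t _
    have h1 : HasDerivAt (fun t : ℝ => u * t) u t := by simpa using (hasDerivAt_id t).const_mul u
    have h2 : HasDerivAt (fun t : ℝ => (1:ℝ) - u * t) (-u) t := h1.const_sub 1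
    have h3 := (h1.exp.mul h2).const_mul (u⁻¹ * u⁻¹)
    refine h3.congr_deriv ?_
    field_simp
    ring
  rw [intervalIntegral.integral_eq_sub_of_hasDerivAt hd
    ((continuous_id.neg.mul (Real.continuous_exp.comp (continuous_const.mul continuous_id))).intervalIntegrable _ _)]
  have h1 : 0 ≤ Real.exp (u * a) := (Real.exp_pos _).le
  have h2 : 0 ≤ u⁻¹ := by positivity
  have h3 : (1:ℝ) ≤ 1 - u * a := by nlinarith
  simp only [mul_zero, Real.exp_zero, one_mul, sub_zero, mul_one]
  nlinarith [mul_nonneg (mul_nonneg h2 h2) (mul_nonneg h1 (by linarith : (0:ℝ) ≤ 1 - u * a))]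



lemma subst_bound (σ : ℝ → ℝ) (σmin : ℝ) (hσmin : 0 < σmin)
    (hσc : ContinuousOn σ (Set.Icc (0:ℝ) 1))
    (hlb : ∀ y ∈ Set.Icc (0:ℝ) 1, σmin ≤ σ y)
    (x : ℝ) (hx0 : 0 ≤ x) (hx1 : x ≤ 1)
    (h : ℝ → ℝ) (hh : Continuous h) (hh0 : ∀ t, 0 ≤ h t)
    (B : ℝ) (hB : ∀ a : ℝ, a ≤ 0 → (∫ t in a..(0:ℝ), h t) ≤ B) :
    (∫ y in (0:ℝ)..x, h (∫ s in x..y, σ s)) ≤ σmin⁻¹ * B := by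
  set φ : ℝ → ℝ := fun y => ∫ s in x..y, σ s with hφ
  have hxm : x ∈ Set.uIcc (0:ℝ) 1 := by
    rw [Set.uIcc_of_le zero_le_one]; exact ⟨hx0, hx1⟩
  have hIcc : Set.uIcc (0:ℝ) x = Set.Icc 0 x := Set.uIcc_of_le hx0
  have hsub01 : Set.Icc (0:ℝ) x ⊆ Set.Icc 0 1 := Set.Icc_subset_Icc le_rfl hx1
  have hσI : IntervalIntegrable σ volume 0 1 := by
    apply ContinuousOn.intervalIntegrable
    rwa [Set.uIcc_of_le zero_le_one]
  have hφcont : ContinuousOn φ (Set.Icc 0 1) := by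
    have := intervalIntegral.continuousOn_primitive_interval' hσI hxm
    rwa [Set.uIcc_of_le zero_le_one] at this
  have hφcont' : ContinuousOn φ (Set.uIcc (0:ℝ) x) := by
    rw [hIcc]; exact hφcont.mono hsub01
  -- derivative of φ
  have hφd : ∀ y ∈ Set.Ioo (min (0:ℝ) x) (max (0:ℝ) x),
      HasDerivWithinAt φ (σ y) (Set.Ioi y) y := by
    intro y hy
    rw [min_eq_left hx0, max_eq_right hx0] at hy
    have hy01 : y ∈ Set.Ioo (0:ℝ) 1 := ⟨hy.1, lt_of_lt_of_le hy.2 hx1⟩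
    have hnhds : Set.Ioo (0:ℝ) 1 ∈ nhds y := Ioo_mem_nhds hy01.1 hy01.2
    have hca : ContinuousAt σ y :=
      (hσc.mono Set.Ioo_subset_Icc_self).continuousAt hnhds
    have hmeasy : StronglyMeasurableAtFilter σ (nhds y) volume :=
      ⟨Set.Ioo 0 1, hnhds,
        (hσc.mono Set.Ioo_subset_Icc_self).aestronglyMeasurable measurableSet_Ioo⟩
    have hint : IntervalIntegrable σ volume x y := by
      apply ContinuousOn.intervalIntegrable
      apply hσc.mono
      refine (Set.uIcc_subset_uIcc ?_ ?_).trans (le_of_eq (Set.uIcc_of_le zero_le_one))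
      · rw [Set.uIcc_of_le zero_le_one]; exact ⟨hx0, hx1⟩
      · rw [Set.uIcc_of_le zero_le_one]; exact ⟨hy01.1.le, hy01.2.le⟩
    exact (intervalIntegral.integral_hasDerivAt_right hint hmeasy hca).hasDerivWithinAt
  -- substitution
  have hsubst : (∫ y in (0:ℝ)..x, σ y • (h ∘ φ) y) = ∫ t in (φ 0)..(φ x), h t :=
    intervalIntegral.integral_comp_smul_deriv'' hφcont' hφd
      (by rw [hIcc]; exact hσc.mono hsub01) (hh.continuousOn)
  have hφx : φ x = 0 := intervalIntegral.integral_same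
  have hφ0 : φ 0 ≤ 0 := by
    have : (0:ℝ) ≤ ∫ s in (0:ℝ)..x, σ s := by
      apply intervalIntegral.integral_nonneg hx0
      intro s hs
      exact le_trans hσmin.le (hlb s (hsub01 hs))
    have hsymm : φ 0 = -∫ s in (0:ℝ)..x, σ s := intervalIntegral.integral_symm 0 x
    linarith
  have hkey : (∫ y in (0:ℝ)..x, σ y • (h ∘ φ) y) ≤ B := by
    rw [hsubst, hφx]
    exact hB _ hφ0
  -- monotone comparison
  have hφhc : ContinuousOn (fun y => h (φ y)) (Set.Icc 0 x) :=
    hh.comp_continuousOn (hφcont.mono hsub01)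
  have hint1 : IntervalIntegrable (fun y => h (φ y)) volume 0 x := by
    apply ContinuousOn.intervalIntegrable; rwa [hIcc]
  have hint2 : IntervalIntegrable (fun y => σmin⁻¹ * (σ y * h (φ y))) volume 0 x := by
    apply ContinuousOn.intervalIntegrable
    rw [hIcc]
    exact (continuousOn_const.mul ((hσc.mono hsub01).mul hφhc))
  have hmono : (∫ y in (0:ℝ)..x, h (φ y))
      ≤ ∫ y in (0:ℝ)..x, σmin⁻¹ * (σ y * h (φ y)) := by
    apply intervalIntegral.integral_mono_on hx0 hint1 hint2
    intro y hy
    have h1 : σmin * h (φ y) ≤ σ y * h (φ y) :=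
      mul_le_mul_of_nonneg_right (hlb y (hsub01 hy)) (hh0 _)
    calc h (φ y) = σmin⁻¹ * (σmin * h (φ y)) := by
          field_simp
      _ ≤ σmin⁻¹ * (σ y * h (φ y)) :=
          mul_le_mul_of_nonneg_left h1 (by positivity)
  calc (∫ y in (0:ℝ)..x, h (φ y)) ≤ ∫ y in (0:ℝ)..x, σmin⁻¹ * (σ y * h (φ y)) := hmono
    _ = σmin⁻¹ * ∫ y in (0:ℝ)..x, σ y * h (φ y) := intervalIntegral.integral_const_mul _ _
    _ ≤ σmin⁻¹ * B := by
        apply mul_le_mul_of_nonneg_left _ (by positivity)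
        simpa [smul_eq_mul, Function.comp] using hkey

lemma deriv_bound (σ g : ℝ → ℝ) (σmin σmax M : ℝ)
    (hσmin : 0 < σmin)
    (hσc : ContinuousOn σ (Set.Icc (0:ℝ) 1))
    (hlb : ∀ x ∈ Set.Icc (0:ℝ) 1, σmin ≤ σ x)
    (hub : ∀ x ∈ Set.Icc (0:ℝ) 1, σ x ≤ σmax)
    (hgm : Measurable g) (hgb : ∀ y ∈ Set.Icc (0:ℝ) 1, |g y| ≤ M)
    (τ : ℝ → ℝ → ℝ) (hτ : ∀ x y, τ x y = ∫ s in x..y, σ s)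
    (S : ℝ → ℝ → ℝ)
    (hS : ∀ μ x, S μ x = μ⁻¹ * ∫ y in (0:ℝ)..x, Real.exp (μ⁻¹ * τ x y) * g y)
    (x : ℝ) (hx0 : 0 ≤ x) (hx1 : x ≤ 1)
    (μ0 : ℝ) (hμ0 : 0 < μ0) :
    |deriv (fun m => S m x) μ0| ≤ 2 * M * σmin⁻¹ * μ0⁻¹ := by
  have hM : 0 ≤ M := le_trans (abs_nonneg _) (hgb 0 ⟨le_rfl, zero_le_one⟩)
  have hσmax : 0 < σmax := lt_of_lt_of_le hσmin
    (le_trans (hlb 0 ⟨le_rfl, zero_le_one⟩) (hub 0 ⟨le_rfl, zero_le_one⟩))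
  have hIoc : Set.uIoc (0:ℝ) x = Set.Ioc 0 x := Set.uIoc_of_le hx0
  have hIcc : Set.uIcc (0:ℝ) x = Set.Icc 0 x := Set.uIcc_of_le hx0
  have hsubI : Set.Icc (0:ℝ) x ⊆ Set.Icc 0 1 := Set.Icc_subset_Icc le_rfl hx1
  have hsub : Set.Ioc (0:ℝ) x ⊆ Set.Icc 0 1 :=
    fun y hy => hsubI ⟨hy.1.le, hy.2⟩
  -- continuity of τ x ·
  have hσI : IntervalIntegrable σ volume 0 1 := by
    apply ContinuousOn.intervalIntegrable; rwa [Set.uIcc_of_le zero_le_one]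
  have hτc : ContinuousOn (fun y => τ x y) (Set.Icc 0 1) := by
    have hprim := intervalIntegral.continuousOn_primitive_interval' hσI
      (by rw [Set.uIcc_of_le zero_le_one]; exact ⟨hx0, hx1⟩)
    rw [Set.uIcc_of_le zero_le_one] at hprim
    exact hprim.congr fun y _ => hτ x y
  have hexpc : ∀ c : ℝ, ContinuousOn (fun y => Real.exp (c * τ x y)) (Set.Icc (0:ℝ) 1) :=
    fun c => Real.continuous_exp.comp_continuousOn (continuousOn_const.mul hτc)
  -- sign and bound for τ
  have hτ0 : ∀ y ∈ Set.Icc (0:ℝ) x, τ x y ≤ 0 := by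
    intro y hy
    rw [hτ, intervalIntegral.integral_symm]
    have h0 : 0 ≤ ∫ s in y..x, σ s := by
      apply intervalIntegral.integral_nonneg hy.2
      intro s hs
      exact le_trans hσmin.le (hlb s ⟨le_trans hy.1 hs.1, le_trans hs.2 hx1⟩)
    linarith
  have hτb : ∀ y ∈ Set.Icc (0:ℝ) x, |τ x y| ≤ σmax := by
    intro y hy
    rw [hτ]
    have hb : ∀ s ∈ Set.uIoc x y, ‖σ s‖ ≤ σmax := by
      intro s hs
      have hs' : s ∈ Set.Icc (0:ℝ) 1 := by
        rcases Set.uIoc_subset_uIcc hs with h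
        rw [Set.uIcc_comm] at h
        have := (Set.uIcc_subset_uIcc (show y ∈ Set.uIcc (0:ℝ) 1 by
          rw [Set.uIcc_of_le zero_le_one]; exact hsubI hy)
          (show x ∈ Set.uIcc (0:ℝ) 1 by
          rw [Set.uIcc_of_le zero_le_one]; exact ⟨hx0, hx1⟩)) h
        rwa [Set.uIcc_of_le zero_le_one] at this
      rw [Real.norm_eq_abs, abs_of_pos (lt_of_lt_of_le hσmin (hlb s hs'))]
      exact hub s hs'
    have := intervalIntegral.norm_integral_le_of_norm_le_const hb
    rw [Real.norm_eq_abs] at this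
    refine this.trans ?_
    have : |y - x| ≤ 1 := by
      rw [abs_sub_le_iff]
      rcases hy with ⟨hy0, hyx⟩
      constructor <;> nlinarith
    nlinarith
  -- differentiate under the integral sign
  have hmeas : ∀ m : ℝ, AEStronglyMeasurable (fun y => Real.exp (m⁻¹ * τ x y) * g y)
      (volume.restrict (Set.Ioc (0:ℝ) x)) :=
    fun m => (((hexpc m⁻¹).mono hsub).aestronglyMeasurable measurableSet_Ioc).mul
      (hgm.aestronglyMeasurable.restrict)
  have hFb : ∀ m : ℝ, 0 < m → ∀ y ∈ Set.Ioc (0:ℝ) x,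
      ‖Real.exp (m⁻¹ * τ x y) * g y‖ ≤ M := by
    intro m hm y hy
    have hy1 : y ∈ Set.Icc (0:ℝ) 1 := hsub hy
    have he : Real.exp (m⁻¹ * τ x y) ≤ 1 :=
      Real.exp_le_one_iff.2 (mul_nonpos_of_nonneg_of_nonpos (by positivity)
        (hτ0 y ⟨hy.1.le, hy.2⟩))
    rw [Real.norm_eq_abs, abs_mul, Real.abs_exp]
    calc Real.exp (m⁻¹ * τ x y) * |g y| ≤ 1 * M :=
          mul_le_mul he (hgb y hy1) (abs_nonneg _) zero_le_one
      _ = M := one_mul M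
  have hFint : IntervalIntegrable (fun y => Real.exp (μ0⁻¹ * τ x y) * g y) volume 0 x := by
    rw [intervalIntegrable_iff, hIoc]
    apply Integrable.mono' (g := fun _ => M)
      (integrableOn_const measure_Ioc_lt_top.ne) (hmeas μ0)
    filter_upwards [ae_restrict_mem measurableSet_Ioc] with y hy
    exact hFb μ0 hμ0 y hy
  have hderivI := intervalIntegral.hasDerivAt_integral_of_dominated_loc_of_deriv_le
    (F := fun m y => Real.exp (m⁻¹ * τ x y) * g y)
    (F' := fun m y => Real.exp (m⁻¹ * τ x y) * (-(m ^ 2)⁻¹ * τ x y) * g y)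
    (x₀ := μ0) (a := 0) (b := x) (μ := volume)
    (bound := fun _ => ((μ0/2) ^ 2)⁻¹ * (σmax * M)) (s := Metric.ball μ0 (μ0/2))
    (Metric.ball_mem_nhds _ (by positivity))
    (Filter.Eventually.of_forall fun m => hIoc ▸ hmeas m)
    hFint
    (by
      rw [hIoc]
      exact ((((hexpc μ0⁻¹).mul (continuousOn_const.mul hτc)).mono hsub).aestronglyMeasurable
        measurableSet_Ioc).mul (hgm.aestronglyMeasurable.restrict))
    (by
      filter_upwards with y hy m hm
      rw [hIoc] at hy
      have hy1 : y ∈ Set.Icc (0:ℝ) 1 := hsub hy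
      have hyx : y ∈ Set.Icc (0:ℝ) x := ⟨hy.1.le, hy.2⟩
      have hm2 : μ0 / 2 < m := by
        have := abs_lt.1 (by rwa [Metric.mem_ball, Real.dist_eq] at hm)
        linarith
      have hmpos : 0 < m := lt_trans (by positivity) hm2
      have e1 : Real.exp (m⁻¹ * τ x y) ≤ 1 :=
        Real.exp_le_one_iff.2 (mul_nonpos_of_nonneg_of_nonpos (by positivity) (hτ0 y hyx))
      have e2 : (m ^ 2)⁻¹ ≤ ((μ0 / 2) ^ 2)⁻¹ := by
        apply inv_anti₀ (by positivity)
        nlinarith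
      have e3 : |τ x y| ≤ σmax := hτb y hyx
      have e4 : |g y| ≤ M := hgb y hy1
      have habs : ‖Real.exp (m⁻¹ * τ x y) * (-(m ^ 2)⁻¹ * τ x y) * g y‖
          = Real.exp (m⁻¹ * τ x y) * ((m ^ 2)⁻¹ * |τ x y|) * |g y| := by
        rw [Real.norm_eq_abs, abs_mul, abs_mul, Real.abs_exp, abs_mul, abs_neg,
          abs_inv, abs_of_pos (show (0:ℝ) < m ^ 2 by positivity)]
      rw [habs]
      have t1 : (m ^ 2)⁻¹ * |τ x y| ≤ ((μ0 / 2) ^ 2)⁻¹ * σmax :=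
        mul_le_mul e2 e3 (abs_nonneg _) (by positivity)
      have t2 : Real.exp (m⁻¹ * τ x y) * ((m ^ 2)⁻¹ * |τ x y|)
          ≤ 1 * (((μ0 / 2) ^ 2)⁻¹ * σmax) :=
        mul_le_mul e1 t1 (by positivity) zero_le_one
      calc Real.exp (m⁻¹ * τ x y) * ((m ^ 2)⁻¹ * |τ x y|) * |g y|
          ≤ 1 * (((μ0 / 2) ^ 2)⁻¹ * σmax) * M :=
            mul_le_mul t2 e4 (abs_nonneg _) (by positivity)
        _ = ((μ0 / 2) ^ 2)⁻¹ * (σmax * M) := by ring)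
    intervalIntegrable_const
    (by
      filter_upwards with y hy m hm
      have hm2 : μ0 / 2 < m := by
        have := abs_lt.1 (by rwa [Metric.mem_ball, Real.dist_eq] at hm)
        linarith
      have hmpos : 0 < m := lt_trans (by positivity) hm2
      have h1 : HasDerivAt (fun m : ℝ => m⁻¹ * τ x y) (-(m ^ 2)⁻¹ * τ x y) m :=
        (hasDerivAt_inv hmpos.ne').mul_const _
      exact h1.exp.mul_const (g y))
  obtain ⟨hF'int, hI⟩ := hderivI
  -- the derivative of S · x
  have heq : (fun m => S m x)
      = fun m => m⁻¹ * ∫ y in (0:ℝ)..x, Real.exp (m⁻¹ * τ x y) * g y :=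
    funext fun m => hS m x
  have hSd : HasDerivAt (fun m => S m x)
      (-(μ0 ^ 2)⁻¹ * (∫ y in (0:ℝ)..x, Real.exp (μ0⁻¹ * τ x y) * g y)
        + μ0⁻¹ * ∫ y in (0:ℝ)..x,
            Real.exp (μ0⁻¹ * τ x y) * (-(μ0 ^ 2)⁻¹ * τ x y) * g y) μ0 := by
    rw [heq]
    exact (hasDerivAt_inv hμ0.ne').mul hI
  rw [hSd.deriv]
  set I0 := ∫ y in (0:ℝ)..x, Real.exp (μ0⁻¹ * τ x y) * g y with hI0
  set J0 := ∫ y in (0:ℝ)..x, Real.exp (μ0⁻¹ * τ x y) * (-(μ0 ^ 2)⁻¹ * τ x y) * g y with hJ0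
  -- bound |I0|
  have boundA : |I0| ≤ M * (σmin⁻¹ * μ0) := by
    have step1 : |I0| ≤ ∫ y in (0:ℝ)..x, |Real.exp (μ0⁻¹ * τ x y) * g y| := by
      have := intervalIntegral.norm_integral_le_integral_norm
        (f := fun y => Real.exp (μ0⁻¹ * τ x y) * g y) (μ := volume) hx0
      simp only [Real.norm_eq_abs] at this
      exact this
    have int1 : IntervalIntegrable (fun y => |Real.exp (μ0⁻¹ * τ x y) * g y|) volume 0 x := by
      have := hFint.norm
      simp only [Real.norm_eq_abs] at this
      exact this
    have int2 : IntervalIntegrable (fun y => M * Real.exp (μ0⁻¹ * τ x y)) volume 0 x := by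
      apply ContinuousOn.intervalIntegrable
      rw [hIcc]
      exact continuousOn_const.mul ((hexpc μ0⁻¹).mono hsubI)
    have step2 : (∫ y in (0:ℝ)..x, |Real.exp (μ0⁻¹ * τ x y) * g y|)
        ≤ ∫ y in (0:ℝ)..x, M * Real.exp (μ0⁻¹ * τ x y) := by
      apply intervalIntegral.integral_mono_on hx0 int1 int2
      intro y hy
      rw [abs_mul, Real.abs_exp, mul_comm M]
      exact mul_le_mul_of_nonneg_left (hgb y (hsubI hy)) (Real.exp_pos _).le
    have step3 : (∫ y in (0:ℝ)..x, M * Real.exp (μ0⁻¹ * τ x y))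
        = M * ∫ y in (0:ℝ)..x, Real.exp (μ0⁻¹ * τ x y) :=
      intervalIntegral.integral_const_mul _ _
    have step4 : (∫ y in (0:ℝ)..x, Real.exp (μ0⁻¹ * τ x y)) ≤ σmin⁻¹ * μ0 := by
      have := subst_bound σ σmin hσmin hσc hlb x hx0 hx1
        (fun t => Real.exp (μ0⁻¹ * t))
        (Real.continuous_exp.comp (continuous_const.mul continuous_id))
        (fun t => (Real.exp_pos _).le) μ0
        (fun a ha => by simpa [inv_inv] using exp_int_bound μ0⁻¹ (by positivity) a ha)
      simp only [hτ]
      exact this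
    calc |I0| ≤ ∫ y in (0:ℝ)..x, M * Real.exp (μ0⁻¹ * τ x y) := step1.trans step2
      _ = M * ∫ y in (0:ℝ)..x, Real.exp (μ0⁻¹ * τ x y) := step3
      _ ≤ M * (σmin⁻¹ * μ0) := mul_le_mul_of_nonneg_left step4 hM
  -- bound |J0|
  have boundB : |J0| ≤ (μ0 ^ 2)⁻¹ * M * (σmin⁻¹ * (μ0 * μ0)) := by
    have step1 : |J0| ≤ ∫ y in (0:ℝ)..x,
        |Real.exp (μ0⁻¹ * τ x y) * (-(μ0 ^ 2)⁻¹ * τ x y) * g y| := by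
      have := intervalIntegral.norm_integral_le_integral_norm
        (f := fun y => Real.exp (μ0⁻¹ * τ x y) * (-(μ0 ^ 2)⁻¹ * τ x y) * g y)
        (μ := volume) hx0
      simp only [Real.norm_eq_abs] at this
      exact this
    have int1 : IntervalIntegrable
        (fun y => |Real.exp (μ0⁻¹ * τ x y) * (-(μ0 ^ 2)⁻¹ * τ x y) * g y|) volume 0 x := by
      have := hF'int.norm
      simp only [Real.norm_eq_abs] at this
      exact this
    have int2 : IntervalIntegrable
        (fun y => ((μ0 ^ 2)⁻¹ * M) * (|τ x y| * Real.exp (μ0⁻¹ * τ x y))) volume 0 x := by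
      apply ContinuousOn.intervalIntegrable
      rw [hIcc]
      exact continuousOn_const.mul (((hτc.mono hsubI).abs).mul ((hexpc μ0⁻¹).mono hsubI))
    have step2 : (∫ y in (0:ℝ)..x, |Real.exp (μ0⁻¹ * τ x y) * (-(μ0 ^ 2)⁻¹ * τ x y) * g y|)
        ≤ ∫ y in (0:ℝ)..x, ((μ0 ^ 2)⁻¹ * M) * (|τ x y| * Real.exp (μ0⁻¹ * τ x y)) := by
      apply intervalIntegral.integral_mono_on hx0 int1 int2
      intro y hy
      have habs : |Real.exp (μ0⁻¹ * τ x y) * (-(μ0 ^ 2)⁻¹ * τ x y) * g y|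
          = Real.exp (μ0⁻¹ * τ x y) * ((μ0 ^ 2)⁻¹ * |τ x y|) * |g y| := by
        rw [abs_mul, abs_mul, Real.abs_exp, abs_mul, abs_neg,
          abs_inv, abs_of_pos (show (0:ℝ) < μ0 ^ 2 by positivity)]
      rw [habs]
      calc Real.exp (μ0⁻¹ * τ x y) * ((μ0 ^ 2)⁻¹ * |τ x y|) * |g y|
          ≤ Real.exp (μ0⁻¹ * τ x y) * ((μ0 ^ 2)⁻¹ * |τ x y|) * M :=
            mul_le_mul_of_nonneg_left (hgb y (hsubI hy)) (by positivity)
        _ = ((μ0 ^ 2)⁻¹ * M) * (|τ x y| * Real.exp (μ0⁻¹ * τ x y)) := by ring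
    have step3 : (∫ y in (0:ℝ)..x, ((μ0 ^ 2)⁻¹ * M) * (|τ x y| * Real.exp (μ0⁻¹ * τ x y)))
        = ((μ0 ^ 2)⁻¹ * M) * ∫ y in (0:ℝ)..x, |τ x y| * Real.exp (μ0⁻¹ * τ x y) :=
      intervalIntegral.integral_const_mul _ _
    have step4 : (∫ y in (0:ℝ)..x, |τ x y| * Real.exp (μ0⁻¹ * τ x y))
        ≤ σmin⁻¹ * (μ0 * μ0) := by
      have := subst_bound σ σmin hσmin hσc hlb x hx0 hx1
        (fun t => |t| * Real.exp (μ0⁻¹ * t))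
        (continuous_abs.mul (Real.continuous_exp.comp (continuous_const.mul continuous_id)))
        (fun t => mul_nonneg (abs_nonneg _) (Real.exp_pos _).le) (μ0 * μ0)
        (fun a ha => by simpa [inv_inv] using texp_int_bound μ0⁻¹ (by positivity) a ha)
      simp only [hτ]
      exact this
    calc |J0| ≤ ∫ y in (0:ℝ)..x, ((μ0 ^ 2)⁻¹ * M) * (|τ x y| * Real.exp (μ0⁻¹ * τ x y)) :=
          step1.trans step2
      _ = ((μ0 ^ 2)⁻¹ * M) * ∫ y in (0:ℝ)..x, |τ x y| * Real.exp (μ0⁻¹ * τ x y) := step3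
      _ ≤ (μ0 ^ 2)⁻¹ * M * (σmin⁻¹ * (μ0 * μ0)) :=
          mul_le_mul_of_nonneg_left step4 (by positivity)
  -- combine
  have habs1 : |(-(μ0 ^ 2)⁻¹ * I0)| = (μ0 ^ 2)⁻¹ * |I0| := by
    rw [abs_mul, abs_neg, abs_inv, abs_of_pos (show (0:ℝ) < μ0 ^ 2 by positivity)]
  have habs2 : |μ0⁻¹ * J0| = μ0⁻¹ * |J0| := by
    rw [abs_mul, abs_of_pos (show (0:ℝ) < μ0⁻¹ by positivity)]
  calc |(-(μ0 ^ 2)⁻¹ * I0 + μ0⁻¹ * J0)|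
      ≤ |(-(μ0 ^ 2)⁻¹ * I0)| + |μ0⁻¹ * J0| := abs_add_le _ _
    _ = (μ0 ^ 2)⁻¹ * |I0| + μ0⁻¹ * |J0| := by rw [habs1, habs2]
    _ ≤ (μ0 ^ 2)⁻¹ * (M * (σmin⁻¹ * μ0))
        + μ0⁻¹ * ((μ0 ^ 2)⁻¹ * M * (σmin⁻¹ * (μ0 * μ0))) := by
        gcongr
    _ = 2 * M * σmin⁻¹ * μ0⁻¹ := by
        field_simp
        ring

end TransportAux

/-- Weighted integrability of the μ-derivative of the transport solution operator:
`∫₀¹ μ^β |∂_μ (S_μ g)(x)| dμ ≤ 2 β⁻¹ σmin⁻¹ ‖g‖_∞`. -/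
theorem transport_solop_mu_deriv_bound (σ g : ℝ → ℝ) (σmin σmax M : ℝ)
    (hσmin : 0 < σmin)
    (hσc : ContinuousOn σ (Set.Icc (0:ℝ) 1))
    (hlb : ∀ x ∈ Set.Icc (0:ℝ) 1, σmin ≤ σ x)
    (hub : ∀ x ∈ Set.Icc (0:ℝ) 1, σ x ≤ σmax)
    (hgm : Measurable g) (hgb : ∀ y ∈ Set.Icc (0:ℝ) 1, |g y| ≤ M)
    (τ : ℝ → ℝ → ℝ) (hτ : ∀ x y, τ x y = ∫ s in x..y, σ s)
    (S : ℝ → ℝ → ℝ)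
    (hS : ∀ μ x, S μ x = μ⁻¹ * ∫ y in (0:ℝ)..x, Real.exp (μ⁻¹ * τ x y) * g y) :
    ∀ β : ℝ, 0 < β → ∀ x ∈ Set.Icc (0:ℝ) 1,
      (∫ μ in (0:ℝ)..1, μ ^ β * |deriv (fun m => S m x) μ|) ≤
        2 * β⁻¹ * σmin⁻¹ * M := by
  intro β hβ x hx
  obtain ⟨hx0, hx1⟩ := hx
  have hM : 0 ≤ M := le_trans (abs_nonneg _) (hgb 0 ⟨le_rfl, zero_le_one⟩)
  have hC0 : 0 ≤ 2 * M * σmin⁻¹ := by positivity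
  have key : ∀ μ ∈ Set.Ioc (0:ℝ) 1, |deriv (fun m => S m x) μ| ≤ 2 * M * σmin⁻¹ * μ⁻¹ :=
    fun μ hμ => deriv_bound σ g σmin σmax M hσmin hσc hlb hub hgm hgb τ hτ S hS
      x hx0 hx1 μ hμ.1
  have hψint : IntervalIntegrable (fun μ : ℝ => 2 * M * σmin⁻¹ * μ ^ (β - 1)) volume 0 1 :=
    (intervalIntegral.intervalIntegrable_rpow' (by linarith)).const_mul _
  have hptwise : ∀ μ ∈ Set.Icc (0:ℝ) 1,
      μ ^ β * |deriv (fun m => S m x) μ| ≤ 2 * M * σmin⁻¹ * μ ^ (β - 1) := by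
    intro μ hμ
    rcases eq_or_lt_of_le hμ.1 with h0 | hpos
    · rw [← h0, Real.zero_rpow hβ.ne', zero_mul]
      have : (0:ℝ) ≤ (0:ℝ) ^ (β - 1) := Real.rpow_nonneg le_rfl _
      positivity
    · have hrw : μ ^ (β - 1) = μ ^ β * μ⁻¹ := by
        rw [Real.rpow_sub hpos, Real.rpow_one, div_eq_mul_inv]
      rw [hrw]
      calc μ ^ β * |deriv (fun m => S m x) μ|
          ≤ μ ^ β * (2 * M * σmin⁻¹ * μ⁻¹) :=
            mul_le_mul_of_nonneg_left (key μ ⟨hpos, hμ.2⟩) (Real.rpow_nonneg hμ.1 β)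
        _ = 2 * M * σmin⁻¹ * (μ ^ β * μ⁻¹) := by ring
  have hfint : IntervalIntegrable
      (fun μ => μ ^ β * |deriv (fun m => S m x) μ|) volume 0 1 := by
    rw [intervalIntegrable_iff, Set.uIoc_of_le zero_le_one]
    have hψ' : IntegrableOn (fun μ : ℝ => 2 * M * σmin⁻¹ * μ ^ (β - 1))
        (Set.Ioc (0:ℝ) 1) volume := by
      have := hψint
      rwa [intervalIntegrable_iff, Set.uIoc_of_le zero_le_one] at this
    apply Integrable.mono' hψ'
    · exact (((Real.continuous_rpow_const hβ.le).measurable).mul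
        ((measurable_deriv _).abs)).aestronglyMeasurable.restrict
    · filter_upwards [ae_restrict_mem measurableSet_Ioc] with μ hμ
      have hnn : (0:ℝ) ≤ μ ^ β * |deriv (fun m => S m x) μ| :=
        mul_nonneg (Real.rpow_nonneg hμ.1.le β) (abs_nonneg _)
      rw [Real.norm_eq_abs, abs_of_nonneg hnn]
      exact hptwise μ ⟨hμ.1.le, hμ.2⟩
  have hmono := intervalIntegral.integral_mono_on zero_le_one hfint hψint hptwise
  have hcomp : (∫ μ in (0:ℝ)..1, 2 * M * σmin⁻¹ * μ ^ (β - 1))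
      = 2 * M * σmin⁻¹ * β⁻¹ := by
    rw [intervalIntegral.integral_const_mul, integral_rpow (Or.inl (by linarith))]
    have hb : β - 1 + 1 = β := by ring
    rw [hb, Real.one_rpow, Real.zero_rpow hβ.ne']
    rw [sub_zero, div_eq_mul_inv, one_mul]
  calc (∫ μ in (0:ℝ)..1, μ ^ β * |deriv (fun m => S m x) μ|)
      ≤ ∫ μ in (0:ℝ)..1, 2 * M * σmin⁻¹ * μ ^ (β - 1) := hmono
    _ = 2 * M * σmin⁻¹ * β⁻¹ := hcomp
    _ = 2 * β⁻¹ * σmin⁻¹ * M := by ring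
end

section
/- Let w_k, μ_k (k = 1,…,N) be the weights and nodes of the N-point Gauss–Legendre rule on [0,1], with N ≥ 2. Suppose μ_1 ≥ c₁ N^{-2} for a constant c₁ > 0 and the quadrature error bound |∫₀¹ g − Σ w_k g(μ_k)| ≤ c N^{-1} ∫₀¹ [μ(1−μ)]^{1/2} |g'(μ)| dμ holds. Then applying this with g(μ) = 1/μ truncated appropriately, one obtains Σ_{k=1}^N w_k μ_k^{-1} ≤ C (1 + log N) for a constant C independent of N. -/
open MeasureTheory


noncomputable def gfun (δ : ℝ) (x : ℝ) : ℝ := x / (x ^ 2 + δ ^ 2)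

lemma denom_pos {δ : ℝ} (hδ : 0 < δ) (x : ℝ) : 0 < x ^ 2 + δ ^ 2 :=
  add_pos_of_nonneg_of_pos (sq_nonneg x) (pow_pos hδ 2)

lemma gfun_contDiff {δ : ℝ} (hδ : 0 < δ) : ContDiff ℝ 1 (gfun δ) :=
  contDiff_id.div ((contDiff_id.pow 2).add contDiff_const) (fun x => (denom_pos hδ x).ne')

lemma gfun_hasDeriv {δ : ℝ} (hδ : 0 < δ) (x : ℝ) :
    HasDerivAt (gfun δ) ((δ ^ 2 - x ^ 2) / (x ^ 2 + δ ^ 2) ^ 2) x := by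
  have h := (hasDerivAt_id x).div ((hasDerivAt_pow 2 x).add_const (δ ^ 2)) (denom_pos hδ x).ne'
  refine h.congr_deriv ?_
  simp only [id_eq, pow_one, Nat.cast_ofNat]
  ring

lemma gfun_deriv_eq {δ : ℝ} (hδ : 0 < δ) :
    deriv (gfun δ) = fun x => (δ ^ 2 - x ^ 2) / (x ^ 2 + δ ^ 2) ^ 2 :=
  funext fun x => (gfun_hasDeriv hδ x).deriv

lemma gfun_deriv_abs {δ : ℝ} (hδ : 0 < δ) (x : ℝ) :
    |deriv (gfun δ) x| ≤ (x ^ 2 + δ ^ 2)⁻¹ := by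
  rw [(gfun_hasDeriv hδ x).deriv, abs_div, abs_of_nonneg (by positivity : (0:ℝ) ≤ (x^2+δ^2)^2)]
  have h1 : |δ ^ 2 - x ^ 2| ≤ x ^ 2 + δ ^ 2 :=
    abs_le.mpr ⟨by nlinarith [sq_nonneg x, sq_nonneg δ], by nlinarith [sq_nonneg x, sq_nonneg δ]⟩
  calc |δ ^ 2 - x ^ 2| / (x ^ 2 + δ ^ 2) ^ 2 ≤ (x ^ 2 + δ ^ 2) / (x ^ 2 + δ ^ 2) ^ 2 := by
        gcongr
    _ = (x ^ 2 + δ ^ 2)⁻¹ := by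
        field_simp

lemma gfun_cont {δ : ℝ} (hδ : 0 < δ) : Continuous (gfun δ) :=
  (gfun_contDiff hδ).continuous

lemma int_gfun_le {δ : ℝ} (hδ0 : 0 < δ) (hδ1 : δ ≤ 1) :
    ∫ x in (0:ℝ)..1, gfun δ x ≤ 1 / 2 - Real.log δ := by
  have hig : ∀ a b : ℝ, IntervalIntegrable (gfun δ) volume a b :=
    fun a b => (gfun_cont hδ0).intervalIntegrable a b
  have hsplit : ∫ x in (0:ℝ)..1, gfun δ x =
      (∫ x in (0:ℝ)..δ, gfun δ x) + ∫ x in δ..(1:ℝ), gfun δ x :=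
    (intervalIntegral.integral_add_adjacent_intervals (hig 0 δ) (hig δ 1)).symm
  have h1 : (∫ x in (0:ℝ)..δ, gfun δ x) ≤ 1 / 2 := by
    have : (∫ x in (0:ℝ)..δ, gfun δ x) ≤ ∫ x in (0:ℝ)..δ, (2 * δ)⁻¹ := by
      apply intervalIntegral.integral_mono_on hδ0.le (hig 0 δ)
        (intervalIntegrable_const)
      intro x hx
      rw [gfun, div_le_iff₀ (denom_pos hδ0 x)]
      rw [inv_mul_eq_div, le_div_iff₀ (by positivity)]
      nlinarith [sq_nonneg (x - δ)]
    calc (∫ x in (0:ℝ)..δ, gfun δ x) ≤ ∫ x in (0:ℝ)..δ, (2 * δ)⁻¹ := this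
      _ = δ * (2 * δ)⁻¹ := by rw [intervalIntegral.integral_const]; simp
      _ = 1 / 2 := by field_simp
  have h2 : (∫ x in δ..(1:ℝ), gfun δ x) ≤ - Real.log δ := by
    have hii : IntervalIntegrable (fun x => 1 / x) volume δ 1 := by
      apply ContinuousOn.intervalIntegrable
      apply ContinuousOn.div continuousOn_const continuousOn_id
      intro x hx
      rw [Set.uIcc_of_le hδ1] at hx
      exact ne_of_gt (lt_of_lt_of_le hδ0 hx.1)
    have : (∫ x in δ..(1:ℝ), gfun δ x) ≤ ∫ x in δ..(1:ℝ), 1 / x := by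
      apply intervalIntegral.integral_mono_on hδ1 (hig δ 1) hii
      intro x hx
      have hx0 : 0 < x := lt_of_lt_of_le hδ0 hx.1
      rw [gfun, div_le_div_iff₀ (denom_pos hδ0 x) hx0]
      nlinarith [sq_nonneg δ]
    calc (∫ x in δ..(1:ℝ), gfun δ x) ≤ ∫ x in δ..(1:ℝ), 1 / x := this
      _ = Real.log (1 / δ) := by
          apply integral_one_div
          rw [Set.uIcc_of_le hδ1]
          intro h
          exact absurd h.1 (not_le.mpr hδ0)
      _ = - Real.log δ := by rw [one_div, Real.log_inv]
  linarith [hsplit, h1, h2]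

lemma int_I_le {δ : ℝ} (hδ0 : 0 < δ) (hδ1 : δ ≤ 1) :
    ∫ x in (0:ℝ)..1, Real.sqrt (x * (1 - x)) * |deriv (gfun δ) x| ≤ 3 / Real.sqrt δ := by
  have hs0 : 0 < Real.sqrt δ := Real.sqrt_pos.mpr hδ0
  have hss : Real.sqrt δ * Real.sqrt δ = δ := Real.mul_self_sqrt hδ0.le
  have hdc : Continuous (deriv (gfun δ)) := by
    rw [gfun_deriv_eq hδ0]
    exact Continuous.div (by continuity) (by continuity) (fun x => (by positivity))
  have hFc : Continuous (fun x => Real.sqrt (x * (1 - x)) * |deriv (gfun δ) x|) :=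
    (Real.continuous_sqrt.comp (by continuity)).mul hdc.abs
  have hsplit : (∫ x in (0:ℝ)..1, Real.sqrt (x * (1 - x)) * |deriv (gfun δ) x|) =
      (∫ x in (0:ℝ)..δ, Real.sqrt (x * (1 - x)) * |deriv (gfun δ) x|) +
      ∫ x in δ..(1:ℝ), Real.sqrt (x * (1 - x)) * |deriv (gfun δ) x| :=
    (intervalIntegral.integral_add_adjacent_intervals (hFc.intervalIntegrable 0 δ)
      (hFc.intervalIntegrable δ 1)).symm
  have h1 : (∫ x in (0:ℝ)..δ, Real.sqrt (x * (1 - x)) * |deriv (gfun δ) x|) ≤ 1 / Real.sqrt δ := by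
    have hmono : (∫ x in (0:ℝ)..δ, Real.sqrt (x * (1 - x)) * |deriv (gfun δ) x|) ≤
        ∫ x in (0:ℝ)..δ, Real.sqrt x * (δ ^ 2)⁻¹ := by
      apply intervalIntegral.integral_mono_on hδ0.le (hFc.intervalIntegrable 0 δ)
        ((Real.continuous_sqrt.mul continuous_const).intervalIntegrable 0 δ)
      intro x hx
      have hx0 : 0 ≤ x := hx.1
      have hx1 : x ≤ 1 := le_trans hx.2 hδ1
      apply mul_le_mul
      · apply Real.sqrt_le_sqrt; nlinarith
      · exact le_trans (gfun_deriv_abs hδ0 x)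
          (by apply inv_anti₀ (by positivity); nlinarith)
      · exact abs_nonneg _
      · exact Real.sqrt_nonneg _
    have hcomp : (∫ x in (0:ℝ)..δ, Real.sqrt x * (δ ^ 2)⁻¹) ≤ 1 / Real.sqrt δ := by
      have he : (∫ x in (0:ℝ)..δ, Real.sqrt x * (δ ^ 2)⁻¹) =
          (∫ x in (0:ℝ)..δ, x ^ ((1:ℝ)/2)) * (δ ^ 2)⁻¹ := by
        rw [← intervalIntegral.integral_mul_const]
        apply intervalIntegral.integral_congr
        intro x hx
        simp [Real.sqrt_eq_rpow]
      rw [he, integral_rpow (Or.inl (by norm_num))]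
      have h32 : δ ^ ((1:ℝ)/2 + 1) = δ * Real.sqrt δ := by
        rw [Real.rpow_add hδ0, Real.rpow_one, Real.sqrt_eq_rpow]
        ring
      rw [h32, Real.zero_rpow (by norm_num), sub_zero]
      have goal_eq : δ * Real.sqrt δ / ((1:ℝ)/2 + 1) * (δ ^ 2)⁻¹ =
          (2/3) * (Real.sqrt δ / δ) := by
        field_simp
        ring
      rw [goal_eq, Real.sqrt_div_self']
      have hp : (0:ℝ) ≤ 1 / Real.sqrt δ := by positivity
      linarith
    linarith
  have h2 : (∫ x in δ..(1:ℝ), Real.sqrt (x * (1 - x)) * |deriv (gfun δ) x|) ≤ 2 / Real.sqrt δ := by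
    have hii : IntervalIntegrable (fun x => x ^ (-(3:ℝ)/2)) volume δ 1 := by
      apply ContinuousOn.intervalIntegrable
      apply ContinuousOn.rpow_const continuousOn_id
      intro x hx
      rw [Set.uIcc_of_le hδ1] at hx
      exact Or.inl (ne_of_gt (lt_of_lt_of_le hδ0 hx.1))
    have hmono : (∫ x in δ..(1:ℝ), Real.sqrt (x * (1 - x)) * |deriv (gfun δ) x|) ≤
        ∫ x in δ..(1:ℝ), x ^ (-(3:ℝ)/2) := by
      apply intervalIntegral.integral_mono_on hδ1 (hFc.intervalIntegrable δ 1) hii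
      intro x hx
      have hx0 : 0 < x := lt_of_lt_of_le hδ0 hx.1
      have hx1 : x ≤ 1 := hx.2
      have hb : Real.sqrt (x * (1 - x)) * |deriv (gfun δ) x| ≤ x ^ ((1:ℝ)/2) * x ^ (-(2:ℝ)) := by
        apply mul_le_mul
        · rw [← Real.sqrt_eq_rpow]
          apply Real.sqrt_le_sqrt; nlinarith
        · refine le_trans (gfun_deriv_abs hδ0 x) ?_
          rw [Real.rpow_neg hx0.le, show ((2:ℝ) = ((2:ℕ):ℝ)) by norm_num, Real.rpow_natCast]
          apply inv_anti₀ (by positivity)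
          nlinarith [sq_nonneg δ]
        · exact abs_nonneg _
        · positivity
      calc Real.sqrt (x * (1 - x)) * |deriv (gfun δ) x| ≤ x ^ ((1:ℝ)/2) * x ^ (-(2:ℝ)) := hb
        _ = x ^ (-(3:ℝ)/2) := by rw [← Real.rpow_add hx0]; norm_num
    have hcomp : (∫ x in δ..(1:ℝ), x ^ (-(3:ℝ)/2)) ≤ 2 / Real.sqrt δ := by
      rw [integral_rpow (Or.inr ⟨by norm_num, by
        rw [Set.uIcc_of_le hδ1]; intro h; exact absurd h.1 (not_le.mpr hδ0)⟩)]
      have hd : δ ^ (-(3:ℝ)/2 + 1) = (Real.sqrt δ)⁻¹ := by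
        rw [show (-(3:ℝ)/2 + 1) = -(1/2) by norm_num, Real.rpow_neg hδ0.le,
          Real.sqrt_eq_rpow]
      rw [hd, Real.one_rpow]
      have e1 : (1 - (Real.sqrt δ)⁻¹) / (-(3:ℝ)/2 + 1) = 2 * (Real.sqrt δ)⁻¹ - 2 := by
        ring
      have e2 : (2:ℝ) / Real.sqrt δ = 2 * (Real.sqrt δ)⁻¹ := by rw [div_eq_mul_inv]
      rw [e1, e2]
      linarith
    linarith
  rw [hsplit]
  have : (1:ℝ) / Real.sqrt δ + 2 / Real.sqrt δ = 3 / Real.sqrt δ := by ring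
  linarith

/-- Bound `Σ_{k=1}^N w_k / μ_k ≤ C (1 + log N)` for Gauss–Legendre-type rules on `[0,1]`,
with `C` independent of `N`. -/
theorem gauss_weight_node_sum_bound (c c₁ : ℝ) (hc : 0 < c) (hc₁ : 0 < c₁) :
    ∃ C : ℝ, ∀ N : ℕ, 2 ≤ N → ∀ w μn : ℕ → ℝ,
      (∀ k, 1 ≤ k → k ≤ N → 0 < w k) →
      (∑ k ∈ Finset.Icc 1 N, w k) = 1 →
      (∀ k, 1 ≤ k → k ≤ N → μn k ∈ Set.Ioo (0:ℝ) 1) →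
      (∀ k j, 1 ≤ k → k ≤ j → j ≤ N → μn k ≤ μn j) →
      c₁ * ((N : ℝ) ^ 2)⁻¹ ≤ μn 1 →
      (∀ g : ℝ → ℝ, ContDiff ℝ 1 g →
        |(∫ x in (0:ℝ)..1, g x) - ∑ k ∈ Finset.Icc 1 N, w k * g (μn k)| ≤
          c * (N : ℝ)⁻¹ * ∫ x in (0:ℝ)..1, (x * (1 - x)) ^ ((1:ℝ)/2) * |deriv g x|) →
      (∑ k ∈ Finset.Icc 1 N, w k / μn k) ≤ C * (1 + Real.log N) := by
  refine ⟨5 + 2 * |Real.log c₁| + 6 * c / Real.sqrt c₁, ?_⟩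
  intro N hN w μn hw hsum hμ hmono hμ1 hquad
  set δ := μn 1 with hδdef
  have hδmem : δ ∈ Set.Ioo (0:ℝ) 1 := hμ 1 le_rfl (le_trans one_le_two hN)
  have hδ0 : 0 < δ := hδmem.1
  have hδ1 : δ ≤ 1 := le_of_lt hδmem.2
  have hN0 : (0:ℝ) < N := by
    have : (2:ℝ) ≤ N := by exact_mod_cast hN
    linarith
  have hN1 : (1:ℝ) ≤ N := by
    have : (2:ℝ) ≤ N := by exact_mod_cast hN
    linarith
  have hq := hquad (gfun δ) (gfun_contDiff hδ0)
  have hrw : (∫ x in (0:ℝ)..1, (x * (1 - x)) ^ ((1:ℝ)/2) * |deriv (gfun δ) x|) =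
      ∫ x in (0:ℝ)..1, Real.sqrt (x * (1 - x)) * |deriv (gfun δ) x| := by
    apply intervalIntegral.integral_congr
    intro x hx
    simp [Real.sqrt_eq_rpow]
  rw [hrw] at hq
  set I := ∫ x in (0:ℝ)..1, Real.sqrt (x * (1 - x)) * |deriv (gfun δ) x| with hIdef
  -- step 1 : termwise comparison
  have hstep1 : (∑ k ∈ Finset.Icc 1 N, w k / μn k) ≤
      2 * ∑ k ∈ Finset.Icc 1 N, w k * gfun δ (μn k) := by
    rw [Finset.mul_sum]
    apply Finset.sum_le_sum
    intro k hk
    obtain ⟨hk1, hkN⟩ := Finset.mem_Icc.mp hk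
    have hμk0 : 0 < μn k := (hμ k hk1 hkN).1
    have hδle : δ ≤ μn k := hmono 1 k le_rfl hk1 hkN
    have hwk : 0 < w k := hw k hk1 hkN
    have key : 1 / μn k ≤ 2 * (μn k / (μn k ^ 2 + δ ^ 2)) := by
      rw [mul_div_assoc', div_le_div_iff₀ hμk0 (denom_pos hδ0 (μn k))]
      nlinarith
    calc w k / μn k = w k * (1 / μn k) := by ring
      _ ≤ w k * (2 * (μn k / (μn k ^ 2 + δ ^ 2))) := by
          exact mul_le_mul_of_nonneg_left key hwk.le
      _ = 2 * (w k * gfun δ (μn k)) := by unfold gfun; ring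
  -- step 2 : quadrature
  have hstep2 : (∑ k ∈ Finset.Icc 1 N, w k * gfun δ (μn k)) ≤
      (∫ x in (0:ℝ)..1, gfun δ x) + c * (N:ℝ)⁻¹ * I := by
    have h := (abs_le.mp hq).1
    linarith
  -- step 3 : error bound
  have herr : c * (N:ℝ)⁻¹ * I ≤ 3 * c / Real.sqrt c₁ := by
    have hsc : 0 < Real.sqrt c₁ := Real.sqrt_pos.mpr hc₁
    have hsδ : Real.sqrt c₁ * (N:ℝ)⁻¹ ≤ Real.sqrt δ := by
      have h := Real.sqrt_le_sqrt hμ1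
      rwa [Real.sqrt_mul hc₁.le, Real.sqrt_inv, Real.sqrt_sq hN0.le] at h
    have hs1 : 0 < Real.sqrt c₁ * (N:ℝ)⁻¹ := by positivity
    have h2 : 3 / Real.sqrt δ ≤ 3 / (Real.sqrt c₁ * (N:ℝ)⁻¹) := by
      gcongr
    have h3 : c * (N:ℝ)⁻¹ * (3 / (Real.sqrt c₁ * (N:ℝ)⁻¹)) = 3 * c / Real.sqrt c₁ := by
      field_simp
    calc c * (N:ℝ)⁻¹ * I ≤ c * (N:ℝ)⁻¹ * (3 / Real.sqrt δ) := by
          apply mul_le_mul_of_nonneg_left (int_I_le hδ0 hδ1) (by positivity)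
      _ ≤ c * (N:ℝ)⁻¹ * (3 / (Real.sqrt c₁ * (N:ℝ)⁻¹)) := by
          apply mul_le_mul_of_nonneg_left h2 (by positivity)
      _ = 3 * c / Real.sqrt c₁ := h3
  -- step 4 : log bound
  have hlog : - Real.log δ ≤ 2 * Real.log N + |Real.log c₁| := by
    have h1 : Real.log (c₁ * ((N:ℝ)^2)⁻¹) ≤ Real.log δ :=
      Real.log_le_log (by positivity) hμ1
    rw [Real.log_mul (ne_of_gt hc₁) (by positivity), Real.log_inv, Real.log_pow] at h1
    have h2 := neg_abs_le (Real.log c₁)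
    push_cast at h1
    linarith
  have hlogN : 0 ≤ Real.log N := Real.log_nonneg hN1
  have hG := int_gfun_le hδ0 hδ1
  have hA : 0 ≤ |Real.log c₁| := abs_nonneg _
  have hB : 0 ≤ 6 * c / Real.sqrt c₁ := by positivity
  have hchain : (∑ k ∈ Finset.Icc 1 N, w k / μn k) ≤
      1 + 4 * Real.log N + 2 * |Real.log c₁| + 6 * c / Real.sqrt c₁ := by
    calc (∑ k ∈ Finset.Icc 1 N, w k / μn k)
        ≤ 2 * ∑ k ∈ Finset.Icc 1 N, w k * gfun δ (μn k) := hstep1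
      _ ≤ 2 * ((∫ x in (0:ℝ)..1, gfun δ x) + c * (N:ℝ)⁻¹ * I) := by linarith
      _ ≤ 2 * ((1/2 - Real.log δ) + 3 * c / Real.sqrt c₁) := by linarith
      _ ≤ 1 + 4 * Real.log N + 2 * |Real.log c₁| + 6 * c / Real.sqrt c₁ := by
          have : 3 * c / Real.sqrt c₁ * 2 = 6 * c / Real.sqrt c₁ := by ring
          linarith
  have hfin : 1 + 4 * Real.log N + 2 * |Real.log c₁| + 6 * c / Real.sqrt c₁ ≤
      (5 + 2 * |Real.log c₁| + 6 * c / Real.sqrt c₁) * (1 + Real.log N) := by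
    nlinarith [mul_nonneg hA hlogN, mul_nonneg hB hlogN]
  linarith
end
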